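/- arXiv:2312.17469 — 4 statements merged into one kernel-verified Lean document; each statement's English description precedes it below -/
import Mathlib

section
/- For each i with 1 ≤ i ≤ N−1, the Noumi operator T̃_i satisfies the quadratic Hecke relation (T̃_i − t·id)∘(T̃_i + id) = 0 as an operator on the ring L = K[z_1^{±1}, …, z_N^{±1}] of Laurent polynomials. -/
open scoped BigOperators
open Finset

noncomputable section

namespace RST

/-! ## Rhombic staircase tableaux -/

/-- The four Greek letters `α, β, γ, δ` used to fill tableaux. -/
inductive Greek : Type
  | A | B | G | D
  deriving DecidableEq

instance : Fintype Greek :=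
  ⟨{Greek.A, Greek.B, Greek.G, Greek.D}, by intro x; cases x <;> simp⟩

/-- The number of `0`'s (i.e. `∗`'s) in a word. -/
def nzeros (w : List ℤ) : ℕ := w.count 0

/-- `‖w‖ = length + number of zeros`. -/
def nn (w : List ℤ) : ℕ := w.length + nzeros w

/-- The tiles of the rhombic diagram `Γ(w)` (with its distinguished tiling) are indexed by
pairs `i ≤ j` such that not both `w_i = 0` and `w_j = 0`.  The tile `(i,j)` is a square if
`w_i ≠ 0 ≠ w_j`, a vertical rhombus if `w_i ≠ 0 = w_j`, and a horizontal rhombus if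
`w_i = 0 ≠ w_j`.  Tile `(i,j)` lies in the west-strip (row) of the border tile `i` and in the
north-strip (column) of the border tile `j`; the border tile `j` itself is the tile `(j,j)`
when `w_j ≠ 0`. -/
def IsTile (w : List ℤ) (i j : Fin w.length) : Prop :=
  i ≤ j ∧ ¬(w.get i = 0 ∧ w.get j = 0)

/-- `ColAbove w i' i` says that a tile `(i',j)` lies strictly above the tile `(i,j)` in the
north-strip of the column `j` (in the distinguished tiling, a north-strip consists of its
squares, ordered bottom-to-top by decreasing row index, followed by its horizontal rhombi,
ordered bottom-to-top by decreasing row index). -/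
def ColAbove (w : List ℤ) (i' i : Fin w.length) : Prop :=
  (w.get i' = 0 ∧ w.get i ≠ 0) ∨
    (w.get i' = 0 ∧ w.get i = 0 ∧ i' < i) ∨
    (w.get i' ≠ 0 ∧ w.get i ≠ 0 ∧ i' < i)

/-- A filling of the tiles of `Γ(w)` by Greek letters (`none` = empty tile). -/
abbrev Filling (w : List ℤ) : Type := Fin w.length → Fin w.length → Option Greek

/-- The defining conditions for a rhombic staircase tableau of type `w`. -/
def IsRST (w : List ℤ) (f : Filling w) : Prop :=
  (∀ i j, ¬ IsTile w i j → f i j = none) ∧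
  (∀ j, w.get j = -1 → (f j j = some Greek.B ∨ f j j = some Greek.G)) ∧
  (∀ j, w.get j = 1 → (f j j = some Greek.A ∨ f j j = some Greek.D)) ∧
  (∀ i j, w.get j = 0 → (f i j = none ∨ f i j = some Greek.B ∨ f i j = some Greek.D)) ∧
  (∀ i j, w.get i = 0 → (f i j = none ∨ f i j = some Greek.A ∨ f i j = some Greek.G)) ∧
  (∀ i j i', (f i j = some Greek.A ∨ f i j = some Greek.G) →
      IsTile w i' j → ColAbove w i' i → f i' j = none) ∧
  (∀ i j j', (f i j = some Greek.B ∨ f i j = some Greek.D) →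
      j < j' → IsTile w i j' → f i j' = none)

/-- The nearest nonempty tile to the right of `(i,j)` in its west-strip contains `g`. -/
def SeesRight (w : List ℤ) (f : Filling w) (i j : Fin w.length) (g : Greek) : Prop :=
  ∃ j' : Fin w.length, i ≤ j' ∧ j' < j ∧ f i j' = some g ∧
    ∀ j'' : Fin w.length, j' < j'' → j'' < j → f i j'' = none

/-- The nearest nonempty tile below `(i,j)` in its north-strip contains `g`. -/
def SeesBelow (w : List ℤ) (f : Filling w) (i j : Fin w.length) (g : Greek) : Prop :=
  ∃ i' : Fin w.length, IsTile w i' j ∧ ColAbove w i i' ∧ f i' j = some g ∧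
    ∀ i'' : Fin w.length, IsTile w i'' j → ColAbove w i i'' → ColAbove w i'' i' → f i'' j = none

variable {R : Type*} [CommRing R]

open Classical in
/-- The weight of the tile `(i,j)` in the filling `f` (the Greek letter it contains, if any,
times the appropriate power of `t`). -/
def tileWt (pa pb pg pd pt : R) (w : List ℤ) (f : Filling w) (i j : Fin w.length) : R :=
  if ¬ IsTile w i j then 1
  else
    match f i j with
    | some Greek.A => pa * (if w.get i = 0 then pt else 1)
    | some Greek.B => pb * (if w.get j = 0 then pt else 1)
    | some Greek.G => pg
    | some Greek.D => pd
    | none =>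
      if w.get i ≠ 0 ∧ w.get j = 0 then
        -- empty vertical rhombus
        (if SeesRight w f i j Greek.B then pt ^ 2
         else if SeesRight w f i j Greek.A ∨ SeesRight w f i j Greek.G then pt else 1)
      else if w.get i = 0 ∧ w.get j ≠ 0 then
        -- empty horizontal rhombus
        (if SeesBelow w f i j Greek.A then pt ^ 2
         else if SeesBelow w f i j Greek.B ∨ SeesBelow w f i j Greek.D then pt else 1)
      else
        -- empty square
        (if SeesRight w f i j Greek.B ∨
            ((SeesRight w f i j Greek.A ∨ SeesRight w f i j Greek.G) ∧
              (SeesBelow w f i j Greek.A ∨ SeesBelow w f i j Greek.D)) then pt else 1)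

/-- The weight `wt(T)` of a filling: the product of the weights of all its tiles. -/
def wt (pa pb pg pd pt : R) (w : List ℤ) (f : Filling w) : R :=
  ∏ i : Fin w.length, ∏ j : Fin w.length, tileWt pa pb pg pd pt w f i j

open Classical in
/-- `R(w)`: the generating polynomial of all rhombic staircase tableaux of type `w`. -/
def RR (pa pb pg pd pt : R) (w : List ℤ) : R :=
  ∑ f ∈ Finset.univ.filter (IsRST w), wt pa pb pg pd pt w f

/-- `λ_M = αβt^{M-1} - γδ`. -/
def lamM (pa pb pg pd pt : R) (M : ℕ) : R := pa * pb * pt ^ (M - 1) - pg * pd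

variable {K : Type*} [Field K]

/-- The normalized generating function
`R̃(w) = (t-1)^{N-r} / ∏_{i=2r}^{N+r-1} (αβt^i - γδ) · R(w)`. -/
def Rt (pa pb pg pd pt : K) (w : List ℤ) : K :=
  ((pt - 1) ^ (w.length - nzeros w) /
      ∏ i ∈ Finset.Ico (2 * nzeros w) (w.length + nzeros w), (pa * pb * pt ^ i - pg * pd)) *
    RR pa pb pg pd pt w

/-! ## The ring of Laurent polynomials in `z_1, …, z_N` -/

/-- The ring `L = K[z_1^{±1}, …, z_N^{±1}]` of Laurent polynomials in `N` variables. -/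
abbrev Lp (K : Type*) [Field K] (N : ℕ) : Type _ := AddMonoidAlgebra K (Fin N → ℤ)

variable {N : ℕ}

/-- The constant `c` as a Laurent polynomial. -/
def CC (c : K) : Lp K N := AddMonoidAlgebra.single 0 c

/-- The variable `z_j`. -/
def Z (j : Fin N) : Lp K N := AddMonoidAlgebra.single (Pi.single j 1) 1

/-- The inverse variable `z_j⁻¹`. -/
def Zinv (j : Fin N) : Lp K N := AddMonoidAlgebra.single (Pi.single j (-1)) 1

/-- The coefficient of the Laurent monomial `z^m` in `f`. -/
def coeff (f : Lp K N) (m : Fin N → ℤ) : K := AddMonoidAlgebra.coeff f m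

/-- `f` does not involve the variable `z_v`. -/
def IndepVar (f : Lp K N) (v : Fin N) : Prop :=
  ∀ m : Fin N → ℤ, coeff f m ≠ 0 → m v = 0

/-- `(z^m - s_{uv} z^m)/(z_u - z_v)` as a Laurent polynomial, where `s_{uv}` exchanges the
variables `z_u, z_v`:  for `p = m u ≥ r = m v` this is `∑_{k=0}^{p-r-1} z_u^{r+k} z_v^{p-1-k}`
(times the other variables), and for `p < r` it is `-∑_{k=0}^{r-p-1} z_u^{p+k} z_v^{r-1-k}`. -/
def ddMono (u v : Fin N) (m : Fin N → ℤ) : Lp K N :=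
  if m v ≤ m u then
    ∑ k ∈ Finset.range (m u - m v).toNat,
      AddMonoidAlgebra.single
        (Function.update (Function.update m u (m v + (k : ℤ))) v (m u - 1 - (k : ℤ))) (1 : K)
  else
    - ∑ k ∈ Finset.range (m v - m u).toNat,
      AddMonoidAlgebra.single
        (Function.update (Function.update m u (m u + (k : ℤ))) v (m v - 1 - (k : ℤ))) (1 : K)

/-- The divided difference `f ↦ (f - s_{uv} f)/(z_u - z_v)`. -/
def ddPair (u v : Fin N) (f : Lp K N) : Lp K N :=
  Finsupp.sum (AddMonoidAlgebra.coeff f) fun m c => CC c * ddMono u v m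

/-- Noumi's operator `T̃ = t - (t z_u - z_v) (1 - s_{uv})/(z_u - z_v)` on Laurent polynomials;
for `u, v` the positions of `z_i, z_{i+1}` this is the operator `T̃_i`, `1 ≤ i ≤ N-1`. -/
def Tmid (t : K) (u v : Fin N) (f : Lp K N) : Lp K N :=
  CC t * f - (CC t * Z u - Z v) * ddPair u v f

/-- `(z^m - s₀ z^m)/(z_v - q z_v⁻¹)` as a Laurent polynomial, where `s₀` maps `z_v ↦ q z_v⁻¹`:
for `p = m v ≥ 0` this is `∑_{k=0}^{p-1} q^k z_v^{p-1-2k}` (times the other variables), and for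
`p < 0` it is `-∑_{k=0}^{-p-1} q^{p+k} z_v^{p+1+2k}`. -/
def dd0Mono (q : K) (v : Fin N) (m : Fin N → ℤ) : Lp K N :=
  if 0 ≤ m v then
    ∑ k ∈ Finset.range (m v).toNat,
      AddMonoidAlgebra.single (Function.update m v (m v - 1 - 2 * (k : ℤ))) (q ^ (k : ℕ))
  else
    - ∑ k ∈ Finset.range (-(m v)).toNat,
      AddMonoidAlgebra.single (Function.update m v (m v + 1 + 2 * (k : ℤ))) (q ^ (m v + (k : ℤ)))

/-- The divided difference `f ↦ (f - s₀ f)/(z_v - q z_v⁻¹)`. -/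
def dd0 (q : K) (v : Fin N) (f : Lp K N) : Lp K N :=
  Finsupp.sum (AddMonoidAlgebra.coeff f) fun m c => CC c * dd0Mono q v m

/-- Noumi's operator `T̃₀ = -ac/q - (z₁-a)(z₁-c)/z₁ · (1-s₀)/(z₁ - q z₁⁻¹)`, acting on the
variable `z_v` (with `v` the position of `z₁`); here
`-(z-a)(z-c)/z = -z + (a+c) - ac z⁻¹`. -/
def T0 (a c q : K) (v : Fin N) (f : Lp K N) : Lp K N :=
  CC (-(a * c) / q) * f + (CC (a + c) - Z v - CC (a * c) * Zinv v) * dd0 q v f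

/-- Noumi's operator `T̃_N = -bd + (bz-1)(dz-1)/z · (1-s_N)/(z - z⁻¹)`, acting on the variable
`z_v` (with `v` the position of `z_N`); here `(bz-1)(dz-1)/z = bd z - (b+d) + z⁻¹`, and
`(1 - s_N)/(z - z⁻¹)` is `dd0` with `q = 1`. -/
def TN (b d : K) (v : Fin N) (f : Lp K N) : Lp K N :=
  CC (-(b * d)) * f + (CC (b * d) * Z v - CC (b + d) + Zinv v) * dd0 1 v f

/-- The operator `T̃_j` for `0 ≤ j ≤ N` (`T̃₀`, `T̃_j` with `1 ≤ j ≤ N-1`, or `T̃_N`);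
the identity for `j` out of range. -/
def TT (a b c d q t : K) (N : ℕ) (j : ℕ) : Lp K N → Lp K N :=
  if h0 : j = 0 then (if hN : 0 < N then T0 a c q ⟨0, hN⟩ else id)
  else if hj : j < N then Tmid t ⟨j - 1, by omega⟩ ⟨j, hj⟩
  else if j = N then (if hN : 0 < N then TN b d ⟨N - 1, by omega⟩ else id)
  else id

/-- The Hecke parameter `t_j` (`t₀ = -ac/q`, `t_N = -bd`, `t_j = t` otherwise). -/
def tpar (a b c d q t : K) (N : ℕ) (j : ℕ) : K :=
  if j = 0 then -(a * c) / q else if j = N then -(b * d) else t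

/-- The inverse operator `T̃_j⁻¹ = t_j⁻¹ (T̃_j + (1 - t_j))`. -/
def TTinv (a b c d q t : K) (N : ℕ) (j : ℕ) (f : Lp K N) : Lp K N :=
  CC (tpar a b c d q t N j)⁻¹ * (TT a b c d q t N j f + CC (1 - tpar a b c d q t N j) * f)

/-- Composition of a list of operators (leftmost applied last). -/
def opProd (l : List (Lp K N → Lp K N)) : Lp K N → Lp K N := l.foldr (· ∘ ·) id

/-- The Cherednik operator
`Y_i = (T̃_i T̃_{i+1} ⋯ T̃_{N-1})(T̃_N T̃_{N-1} ⋯ T̃_1 T̃_0)(T̃₁⁻¹ T̃₂⁻¹ ⋯ T̃_{i-1}⁻¹)`. -/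
def Yop (a b c d q t : K) (N : ℕ) (i : ℕ) : Lp K N → Lp K N :=
  opProd (((List.range' i (N - i)).map (TT a b c d q t N)) ++
    (((List.range (N + 1)).reverse).map (TT a b c d q t N)) ++
    ((List.range' 1 (i - 1)).map (TTinv a b c d q t N)))

/-- Exchange of the variables `z_u` and `z_v`. -/
def swapVars (u v : Fin N) (f : Lp K N) : Lp K N :=
  Finsupp.sum (AddMonoidAlgebra.coeff f) fun m c => AddMonoidAlgebra.single (m ∘ (Equiv.swap u v)) c

/-! ## The open boundary ASEP polynomials `F_μ` -/

/-- The word `μ|_{S̄}` obtained from `μ` by deleting the entries in positions of `S`. -/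
def wordOf (N : ℕ) (mu : Fin N → ℤ) (S : Finset (Fin N)) : List ℤ :=
  ((List.finRange N).filter (fun k => decide (k ∉ S))).map mu

/-- The open boundary ASEP polynomial
`F_μ(z;t) = ∑_{S ⊆ V} R̃(μ|_{S̄}) ∏_{i ∈ S} (z_i^{μ_i} - 1)` where `V = {i : μ_i ≠ 0}`. -/
def FF (pa pb pg pd pt : K) (N : ℕ) (mu : Fin N → ℤ) : Lp K N :=
  ∑ S ∈ (Finset.univ.filter fun k => mu k ≠ 0).powerset,
    CC (Rt pa pb pg pd pt (wordOf N mu S)) *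
      ∏ i ∈ S, (AddMonoidAlgebra.single (Pi.single i (mu i)) (1 : K) - 1)

/-- `μ` is a signed permutation of `λ`. -/
def IsSignedPerm (lam mu : Fin N → ℤ) : Prop :=
  ∃ σ : Equiv.Perm (Fin N), ∀ i, mu i = lam (σ i) ∨ mu i = -lam (σ i)

/-- The word `δ = ((-1)^{N-r}, 0^r)`. -/
def deltaWord (N r : ℕ) : Fin N → ℤ := fun k => if (k : ℕ) < N - r then -1 else 0

/-! ## Generic parameter fields -/

/-- The field `ℚ(a,b,c,d,q,t)` of rational functions in six parameters. -/
abbrev K6 : Type := FractionRing (MvPolynomial (Fin 6) ℚ)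

/-- The generators of `K6`. -/
def gen6 (k : Fin 6) : K6 := algebraMap (MvPolynomial (Fin 6) ℚ) K6 (MvPolynomial.X k)

/-- The parameters `a, b, c, d, q, t` in `ℚ(a,b,c,d,q,t)`. -/
def pA : K6 := gen6 0
def pB : K6 := gen6 1
def pC : K6 := gen6 2
def pD : K6 := gen6 3
def pQ : K6 := gen6 4
def pT : K6 := gen6 5

/-- The change of variables `α = -ac(1-t)/((a-1)(c-1))`. -/
def chA : K6 := -(pA * pC) * (1 - pT) / ((pA - 1) * (pC - 1))
/-- The change of variables `γ = (1-t)/((a-1)(c-1))`. -/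
def chG : K6 := (1 - pT) / ((pA - 1) * (pC - 1))
/-- The change of variables `β = -bd(1-t)/((b-1)(d-1))`. -/
def chB : K6 := -(pB * pD) * (1 - pT) / ((pB - 1) * (pD - 1))
/-- The change of variables `δ = (1-t)/((b-1)(d-1))`. -/
def chD : K6 := (1 - pT) / ((pB - 1) * (pD - 1))

/-- The field `ℚ(α,β,γ,δ,t)` of rational functions in five parameters. -/
abbrev K5 : Type := FractionRing (MvPolynomial (Fin 5) ℚ)

/-- The generators of `K5`. -/
def gen5 (k : Fin 5) : K5 := algebraMap (MvPolynomial (Fin 5) ℚ) K5 (MvPolynomial.X k)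

/-- The parameters `α, β, γ, δ, t` in `ℚ(α,β,γ,δ,t)`. -/
def vA : K5 := gen5 0
def vB : K5 := gen5 1
def vG : K5 := gen5 2
def vD : K5 := gen5 3
def vT : K5 := gen5 4

/-- Words of length `N` with entries in `{-1,0,1}` having exactly `r` zeros, as a finite set
of functions `Fin N → ℤ`. -/
def WordsF (N r : ℕ) : Finset (Fin N → ℤ) :=
  (Finset.univ.image fun g : Fin N → Fin 3 => fun k => ((g k : ℤ) - 1)).filter
    fun mu => (Finset.univ.filter fun k => mu k = 0).card = r

/-- `R(μ)` for a word given as a function `Fin N → ℤ`. -/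
def RRw (pa pb pg pd pt : R) (N : ℕ) (mu : Fin N → ℤ) : R :=
  RR pa pb pg pd pt ((List.finRange N).map mu)

open Classical in
/-- The total weighted jump rate (without the normalization `1/(N+1)`) from state `μ` to
state `ν` in the two-species open boundary ASEP. -/
def jump (pa pb pg pd pt : K) (N : ℕ) (mu nu : Fin N → ℤ) : K :=
  (∑ u : Fin N,
    if h : (u : ℕ) + 1 < N then
      ((if nu = mu ∘ Equiv.swap u ⟨(u : ℕ) + 1, h⟩ ∧
            ((mu u, mu ⟨(u : ℕ) + 1, h⟩) = (1, -1) ∨ (mu u, mu ⟨(u : ℕ) + 1, h⟩) = (1, 0) ∨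
              (mu u, mu ⟨(u : ℕ) + 1, h⟩) = (0, -1)) then pt else 0) +
        (if nu = mu ∘ Equiv.swap u ⟨(u : ℕ) + 1, h⟩ ∧
            ((mu u, mu ⟨(u : ℕ) + 1, h⟩) = (-1, 1) ∨ (mu u, mu ⟨(u : ℕ) + 1, h⟩) = (0, 1) ∨
              (mu u, mu ⟨(u : ℕ) + 1, h⟩) = (-1, 0)) then 1 else 0))
    else 0) +
  (if hN : 0 < N then
      ((if mu ⟨0, hN⟩ = -1 ∧ nu = Function.update mu ⟨0, hN⟩ 1 then pa else 0) +
        (if mu ⟨0, hN⟩ = 1 ∧ nu = Function.update mu ⟨0, hN⟩ (-1) then pg else 0) +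
        (if mu ⟨N - 1, by omega⟩ = 1 ∧ nu = Function.update mu ⟨N - 1, by omega⟩ (-1) then pb
          else 0) +
        (if mu ⟨N - 1, by omega⟩ = -1 ∧ nu = Function.update mu ⟨N - 1, by omega⟩ 1 then pd
          else 0))
    else 0)

open Classical in
/-- The one-step transition matrix of the two-species open boundary ASEP on the set of states
with exactly `r` zeros: off-diagonal entries are the jump rates divided by `N+1`, and the
diagonal entry is the complementary probability. -/
def Pmat (pa pb pg pd pt : K) (N r : ℕ) (mu nu : Fin N → ℤ) : K :=
  jump pa pb pg pd pt N mu nu / (N + 1) +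
    (if nu = mu then 1 - (∑ x ∈ WordsF N r, jump pa pb pg pd pt N mu x) / (N + 1) else 0)

/-- A list as a word-function (entries beyond the length are `0`). -/
def funOf (N : ℕ) (w : List ℤ) : Fin N → ℤ := fun k => w.getD (k : ℕ) 0

end RST

namespace RST

variable {N : ℕ} {K : Type*} [Field K]

lemma X_upd_congr (u v : Fin N) (m : Fin N → ℤ) {A A' B B' : ℤ} (hA : A = A') (hB : B = B') :
    Function.update (Function.update m u A) v B = Function.update (Function.update m u A') v B' := by
  rw [hA, hB]

lemma X_addeu (u v : Fin N) (huv : u ≠ v) (m : Fin N → ℤ) (A B : ℤ) :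
    Pi.single u (1:ℤ) + Function.update (Function.update m u A) v B
      = Function.update (Function.update m u (A+1)) v B := by
  funext x
  rcases eq_or_ne x v with rfl | hxv
  · simp [Function.update_self, Pi.single_apply, Ne.symm huv]
  rcases eq_or_ne x u with rfl | hxu
  · simp [Function.update_of_ne hxv, Function.update_self, Pi.single_apply]; ring
  · simp [Function.update_of_ne hxv, Function.update_of_ne hxu, Pi.single_apply, hxu]

lemma X_addev (u v : Fin N) (m : Fin N → ℤ) (A B : ℤ) :
    Pi.single v (1:ℤ) + Function.update (Function.update m u A) v B
      = Function.update (Function.update m u A) v (B+1) := by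
  funext x
  rcases eq_or_ne x v with rfl | hxv
  · simp [Function.update_self, Pi.single_apply]; ring
  · simp [Function.update_of_ne hxv, Pi.single_apply, hxv]

lemma X_upd_eq_self (u v : Fin N) (m : Fin N → ℤ) :
    Function.update (Function.update m u (m u)) v (m v) = m := by
  funext x
  rcases eq_or_ne x v with rfl | hxv
  · simp
  rcases eq_or_ne x u with rfl | hxu
  · simp [Function.update_of_ne hxv]
  · simp [Function.update_of_ne hxv, Function.update_of_ne hxu]

lemma X_upd_eq_swap (u v : Fin N) (m : Fin N → ℤ) :
    Function.update (Function.update m u (m v)) v (m u) = m ∘ Equiv.swap u v := by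
  funext x
  rcases eq_or_ne x v with rfl | hxv
  · simp [Equiv.swap_apply_right]
  rcases eq_or_ne x u with rfl | hxu
  · simp [Function.update_of_ne hxv, Equiv.swap_apply_left]
  · simp [Function.update_of_ne hxv, Function.update_of_ne hxu,
      Equiv.swap_apply_of_ne_of_ne hxu hxv]

lemma X_key1 (u v : Fin N) (huv : u ≠ v) (m : Fin N → ℤ) :
    (Z u - Z v : Lp K N) * ddMono u v m
      = AddMonoidAlgebra.single m 1 - AddMonoidAlgebra.single (m ∘ Equiv.swap u v) 1 := by
  rw [ddMono, Z, Z]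
  set E : ℕ → (Fin N → ℤ) := fun k =>
    Function.update (Function.update m u (m v + (k:ℤ))) v (m u - (k:ℤ)) with hE
  set G : ℕ → (Fin N → ℤ) := fun k =>
    Function.update (Function.update m u (m u + (k:ℤ))) v (m v - (k:ℤ)) with hG
  split_ifs with h
  · have hn : (((m u - m v).toNat : ℕ) : ℤ) = m u - m v := Int.toNat_of_nonneg (by omega)
    rw [sub_mul, Finset.mul_sum, Finset.mul_sum]
    have h1 : ∀ k ∈ Finset.range (m u - m v).toNat,
        AddMonoidAlgebra.single (Pi.single u 1) (1:K) *
          AddMonoidAlgebra.single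
            (Function.update (Function.update m u (m v + (k : ℤ))) v (m u - 1 - (k : ℤ))) 1
          = AddMonoidAlgebra.single (E (k+1)) 1 := by
      intro k _
      rw [AddMonoidAlgebra.single_mul_single, one_mul, X_addeu u v huv]
      exact congrArg (fun e => AddMonoidAlgebra.single e (1:K))
        (X_upd_congr u v m (by push_cast; ring) (by push_cast; ring))
    have h2 : ∀ k ∈ Finset.range (m u - m v).toNat,
        AddMonoidAlgebra.single (Pi.single v 1) (1:K) *
          AddMonoidAlgebra.single
            (Function.update (Function.update m u (m v + (k : ℤ))) v (m u - 1 - (k : ℤ))) 1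
          = AddMonoidAlgebra.single (E k) 1 := by
      intro k _
      rw [AddMonoidAlgebra.single_mul_single, one_mul, X_addev u v]
      exact congrArg (fun e => AddMonoidAlgebra.single e (1:K))
        (X_upd_congr u v m rfl (by push_cast; ring))
    rw [Finset.sum_congr rfl h1, Finset.sum_congr rfl h2, ← Finset.sum_sub_distrib,
      Finset.sum_range_sub (fun k => AddMonoidAlgebra.single (E k) (1:K))]
    have hEn : E (m u - m v).toNat = m := by
      rw [hE]
      refine (X_upd_congr u v m (A' := m u) (B' := m v) (by omega) (by omega)).trans
        (X_upd_eq_self u v m)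
    have hE0 : E 0 = m ∘ Equiv.swap u v := by
      rw [hE]
      refine (X_upd_congr u v m (A' := m v) (B' := m u) (by push_cast; ring)
        (by push_cast; ring)).trans (X_upd_eq_swap u v m)
    rw [hEn, hE0]
  · have h' : m u < m v := by omega
    have hn : (((m v - m u).toNat : ℕ) : ℤ) = m v - m u := Int.toNat_of_nonneg (by omega)
    rw [mul_neg, sub_mul, Finset.mul_sum, Finset.mul_sum]
    have h1 : ∀ k ∈ Finset.range (m v - m u).toNat,
        AddMonoidAlgebra.single (Pi.single u 1) (1:K) *
          AddMonoidAlgebra.single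
            (Function.update (Function.update m u (m u + (k : ℤ))) v (m v - 1 - (k : ℤ))) 1
          = AddMonoidAlgebra.single (G (k+1)) 1 := by
      intro k _
      rw [AddMonoidAlgebra.single_mul_single, one_mul, X_addeu u v huv]
      exact congrArg (fun e => AddMonoidAlgebra.single e (1:K))
        (X_upd_congr u v m (by push_cast; ring) (by push_cast; ring))
    have h2 : ∀ k ∈ Finset.range (m v - m u).toNat,
        AddMonoidAlgebra.single (Pi.single v 1) (1:K) *
          AddMonoidAlgebra.single
            (Function.update (Function.update m u (m u + (k : ℤ))) v (m v - 1 - (k : ℤ))) 1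
          = AddMonoidAlgebra.single (G k) 1 := by
      intro k _
      rw [AddMonoidAlgebra.single_mul_single, one_mul, X_addev u v]
      exact congrArg (fun e => AddMonoidAlgebra.single e (1:K))
        (X_upd_congr u v m rfl (by push_cast; ring))
    rw [Finset.sum_congr rfl h1, Finset.sum_congr rfl h2, neg_sub, ← Finset.sum_sub_distrib,
      Finset.sum_range_sub' (fun k => AddMonoidAlgebra.single (G k) (1:K))]
    have hGn : G (m v - m u).toNat = m ∘ Equiv.swap u v := by
      rw [hG]
      refine (X_upd_congr u v m (A' := m v) (B' := m u) (by omega) (by omega)).trans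
        (X_upd_eq_swap u v m)
    have hG0 : G 0 = m := by
      rw [hG]
      refine (X_upd_congr u v m (A' := m u) (B' := m v) (by push_cast; ring)
        (by push_cast; ring)).trans (X_upd_eq_self u v m)
    rw [hGn, hG0]

def X_swapHom (u v : Fin N) : (Fin N → ℤ) →+ (Fin N → ℤ) where
  toFun m := m ∘ Equiv.swap u v
  map_zero' := rfl
  map_add' _ _ := rfl

def SW (K : Type*) [Field K] {N : ℕ} (u v : Fin N) : Lp K N →+* Lp K N :=
  AddMonoidAlgebra.mapDomainRingHom K (X_swapHom u v)

lemma SW_apply (u v : Fin N) (f : Lp K N) :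
    SW K u v f = AddMonoidAlgebra.mapDomain (fun m => m ∘ Equiv.swap u v) f := rfl

lemma SW_single (u v : Fin N) (m : Fin N → ℤ) (c : K) :
    SW K u v (AddMonoidAlgebra.single m c) = AddMonoidAlgebra.single (m ∘ Equiv.swap u v) c := by
  rw [SW_apply]; exact AddMonoidAlgebra.mapDomain_single

lemma SW_SW (u v : Fin N) (f : Lp K N) : SW K u v (SW K u v f) = f := by
  rw [SW_apply, SW_apply]; apply AddMonoidAlgebra.coeff_injective
  simp only [AddMonoidAlgebra.mapDomain, AddMonoidAlgebra.coeff_ofCoeff]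
  rw [← Finsupp.mapDomain_comp]
  have : ((fun m : Fin N → ℤ => m ∘ Equiv.swap u v) ∘ (fun m => m ∘ Equiv.swap u v)) = id := by
    funext m; funext x; simp [Function.comp, Equiv.swap_apply_self]
  rw [this, Finsupp.mapDomain_id]

lemma X_single_comp_swap (u v : Fin N) (huv : u ≠ v) :
    (Pi.single u (1:ℤ)) ∘ Equiv.swap u v = Pi.single v 1 := by
  funext x
  rcases eq_or_ne x u with rfl | hxu
  · simp [Equiv.swap_apply_left, Pi.single_apply, huv, Ne.symm huv]
  rcases eq_or_ne x v with rfl | hxv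
  · simp [Equiv.swap_apply_right, Pi.single_apply]
  · simp [Equiv.swap_apply_of_ne_of_ne hxu hxv, Pi.single_apply, hxu, hxv]

lemma SW_CC (u v : Fin N) (c : K) : SW K u v (CC c) = CC c := by
  rw [CC, SW_single]; rfl

lemma SW_Zu (u v : Fin N) (huv : u ≠ v) : SW K u v (Z u) = Z v := by
  rw [Z, SW_single, X_single_comp_swap u v huv, Z]

lemma SW_Zv (u v : Fin N) (huv : u ≠ v) : SW K u v (Z v) = Z u := by
  rw [Z, SW_single, Equiv.swap_comm, X_single_comp_swap v u (Ne.symm huv), Z]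

lemma X_keyL (u v : Fin N) (huv : u ≠ v) (f : Lp K N) :
    (Z u - Z v : Lp K N) * ddPair u v f = f - SW K u v f := by
  rw [ddPair, Finsupp.mul_sum]
  have step : ∀ m ∈ f.coeff.support,
      (Z u - Z v : Lp K N) * (CC (f.coeff m) * ddMono u v m)
        = (fun (m : Fin N → ℤ) (c : K) => AddMonoidAlgebra.single m c
            - AddMonoidAlgebra.single (m ∘ Equiv.swap u v) c) m (f.coeff m) := by
    intro m _
    simp only []
    rw [mul_left_comm, X_key1 u v huv m, CC, mul_sub,
      AddMonoidAlgebra.single_mul_single, AddMonoidAlgebra.single_mul_single,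
      zero_add, zero_add, mul_one]
  refine (Finsupp.sum_congr (g2 := fun (m : Fin N → ℤ) (c : K) => AddMonoidAlgebra.single m c
    - AddMonoidAlgebra.single (m ∘ Equiv.swap u v) c) step).trans ?_
  rw [Finsupp.sum_sub]
  congr 1
  exact AddMonoidAlgebra.sum_coeff_single f
  rw [SW_apply]; apply AddMonoidAlgebra.coeff_injective
  simp [AddMonoidAlgebra.mapDomain, Finsupp.mapDomain]

lemma X_Zne (u v : Fin N) (huv : u ≠ v) : (Z u - Z v : Lp K N) ≠ 0 := by
  intro h
  rw [sub_eq_zero, Z, Z] at h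
  have hne : (Pi.single v 1 : Fin N → ℤ) ≠ Pi.single u 1 := by
    intro he
    have := congrFun he u
    rw [Pi.single_eq_of_ne huv, Pi.single_eq_same] at this
    exact absurd this (by decide)
  exact hne ((AddMonoidAlgebra.single_left_inj (one_ne_zero)).mp h).symm

lemma SW_dd (u v : Fin N) (huv : u ≠ v) (f : Lp K N) :
    SW K u v (ddPair u v f) = ddPair u v f := by
  have h := X_keyL u v huv f
  have h2 := congrArg (SW K u v) h
  rw [map_mul, map_sub, map_sub, SW_SW, SW_Zu u v huv, SW_Zv u v huv] at h2
  refine mul_left_cancel₀ (X_Zne u v huv) ?_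
  linear_combination -h2 - h

theorem X_main (t : K) (u v : Fin N) (huv : u ≠ v) (f : Lp K N) :
    Tmid t u v (Tmid t u v f + f) - CC t * (Tmid t u v f + f) = 0 := by
  set g := Tmid t u v f + f with hg
  have hDg : ddPair u v g = 0 := by
    refine mul_left_cancel₀ (X_Zne u v huv) ?_
    rw [mul_zero, X_keyL u v huv g, sub_eq_zero, hg, Tmid]
    simp only [map_add, map_sub, map_mul, SW_CC, SW_Zu u v huv, SW_Zv u v huv,
      SW_dd u v huv]
    have h := X_keyL u v huv f
    linear_combination (-(CC t) - 1) * h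
  rw [Tmid, hDg]
  ring


/-- For `1 ≤ i ≤ N-1`, the Noumi operator `T̃_i` satisfies the quadratic
Hecke relation `(T̃_i - t·id) ∘ (T̃_i + id) = 0` on the ring of Laurent polynomials
`L = K[z_1^{±1}, …, z_N^{±1}]` over `K = ℚ(a,b,c,d,q,t)`. -/
theorem statement0 (N : ℕ) (hN : 1 ≤ N) (i : ℕ) (h1 : 1 ≤ i) (h2 : i ≤ N - 1)
    (f : Lp K6 N) :
    Tmid pT ⟨i - 1, by omega⟩ ⟨i, by omega⟩
        (Tmid pT ⟨i - 1, by omega⟩ ⟨i, by omega⟩ f + f) -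
      CC pT * (Tmid pT ⟨i - 1, by omega⟩ ⟨i, by omega⟩ f + f) = 0 := by
  refine X_main pT ⟨i - 1, by omega⟩ ⟨i, by omega⟩ ?_ f
  simp only [ne_eq, Fin.mk.injEq]
  omega

end RST
end
end

section
/- The Noumi operator T̃_N satisfies the quadratic Hecke relation (T̃_N − t_N·id)∘(T̃_N + id) = 0 on the ring L of Laurent polynomials, where t_N = −bd. -/
open scoped BigOperators
open Finset

noncomputable section

namespace RST

variable {K : Type*} [Field K] {N : ℕ}

def negCoord (v : Fin N) : (Fin N → ℤ) ≃+ (Fin N → ℤ) where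
  toFun m := Function.update m v (-(m v))
  invFun m := Function.update m v (-(m v))
  left_inv m := by
    funext i
    rcases eq_or_ne i v with rfl | h
    · simp
    · simp [Function.update_of_ne h]
  right_inv m := by
    funext i
    rcases eq_or_ne i v with rfl | h
    · simp
    · simp [Function.update_of_ne h]
  map_add' a b := by
    funext i
    rcases eq_or_ne i v with rfl | h
    · simp [add_comm]
    · simp [Function.update_of_ne h]

lemma negCoord_apply (v : Fin N) (m : Fin N → ℤ) :
    negCoord v m = Function.update m v (-(m v)) := rfl

lemma single_add_update (v : Fin N) (m : Fin N → ℤ) (a e : ℤ) :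
    Pi.single v a + Function.update m v e = Function.update m v (e + a) := by
  funext i
  rcases eq_or_ne i v with rfl | h
  · simp [add_comm]
  · simp [Function.update_of_ne h, Pi.single_eq_of_ne h]

lemma hterm (v : Fin N) (m : Fin N → ℤ) (e : ℤ) :
    (Z v - Zinv v) * AddMonoidAlgebra.single (Function.update m v e) (1:K)
      = AddMonoidAlgebra.single (Function.update m v (e + 1)) 1
        - AddMonoidAlgebra.single (Function.update m v (e - 1)) 1 := by
  rw [sub_mul, Z, Zinv, AddMonoidAlgebra.single_mul_single, AddMonoidAlgebra.single_mul_single,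
    one_mul, single_add_update, single_add_update, sub_eq_add_neg e 1]

lemma key_mono (v : Fin N) (m : Fin N → ℤ) :
    (Z v - Zinv v) * dd0Mono 1 v m =
      AddMonoidAlgebra.single m (1:K) -
        AddMonoidAlgebra.single (Function.update m v (-(m v))) 1 := by
  rcases le_or_gt 0 (m v) with h | h
  · rw [dd0Mono, if_pos h, Finset.mul_sum]
    have hstep : ∀ k ∈ Finset.range (m v).toNat,
        (Z v - Zinv v) *
            AddMonoidAlgebra.single (Function.update m v (m v - 1 - 2 * (k : ℤ))) ((1:K) ^ (k:ℕ))
          = (fun k : ℕ => AddMonoidAlgebra.single (Function.update m v (m v - 2 * (k : ℤ))) (1:K)) k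
            - (fun k : ℕ =>
                AddMonoidAlgebra.single (Function.update m v (m v - 2 * (k : ℤ))) (1:K)) (k + 1) := by
      intro k _
      rw [one_pow, hterm]
      have e1 : m v - 1 - 2 * (k:ℤ) + 1 = m v - 2 * (k:ℤ) := by ring
      have e2 : m v - 1 - 2 * (k:ℤ) - 1 = m v - 2 * (((k:ℕ)+1 : ℕ) : ℤ) := by push_cast; ring
      rw [e1, e2]
    rw [Finset.sum_congr rfl hstep, Finset.sum_range_sub']
    congr 2
    · rw [Nat.cast_zero, mul_zero, sub_zero, Function.update_eq_self]
    · rw [Int.toNat_of_nonneg h]; ring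
  · rw [dd0Mono, if_neg (not_le.mpr h), mul_neg, Finset.mul_sum]
    have hstep : ∀ k ∈ Finset.range (-(m v)).toNat,
        (Z v - Zinv v) *
            AddMonoidAlgebra.single (Function.update m v (m v + 1 + 2 * (k : ℤ)))
              ((1:K) ^ (m v + (k : ℤ)))
          = (fun k : ℕ => -AddMonoidAlgebra.single (Function.update m v (m v + 2 * (k : ℤ))) (1:K)) k
            - (fun k : ℕ =>
                -AddMonoidAlgebra.single (Function.update m v (m v + 2 * (k : ℤ))) (1:K)) (k + 1) := by
      intro k _
      rw [one_zpow, hterm]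
      have e1 : m v + 1 + 2 * (k:ℤ) + 1 = m v + 2 * (((k:ℕ)+1 : ℕ) : ℤ) := by push_cast; ring
      have e2 : m v + 1 + 2 * (k:ℤ) - 1 = m v + 2 * (k:ℤ) := by ring
      rw [e1, e2]
      ring
    rw [Finset.sum_congr rfl hstep, Finset.sum_range_sub']
    have g0 : Function.update m v (m v + 2 * ((0:ℕ):ℤ)) = m := by
      rw [Nat.cast_zero, mul_zero, add_zero, Function.update_eq_self]
    have gn : Function.update m v (m v + 2 * (((-(m v)).toNat : ℕ):ℤ))
        = Function.update m v (-(m v)) := by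
      rw [Int.toNat_of_nonneg (by omega : (0:ℤ) ≤ -(m v))]
      congr 1
      ring
    rw [g0, gn]
    ring

lemma domCongr_eq_mapDomain (v : Fin N) (f : Lp K N) :
    (AddMonoidAlgebra.domCongr K K (negCoord v)) f = AddMonoidAlgebra.mapDomain (negCoord v) f := by
  induction f using AddMonoidAlgebra.induction with
  | zero => simp
  | single_add a b f _ _ ih =>
      rw [map_add, AddMonoidAlgebra.mapDomain_add, ih, AddMonoidAlgebra.mapDomain_single]
      congr 1
      exact AddMonoidAlgebra.domCongr_single (negCoord v) a b

lemma key (v : Fin N) (f : Lp K N) :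
    (Z v - Zinv v) * dd0 1 v f
      = f - (AddMonoidAlgebra.domCongr K K (negCoord v)) f := by
  rw [domCongr_eq_mapDomain, dd0, Finsupp.mul_sum]
  have hstep : ∀ m ∈ f.coeff.support,
      (Z v - Zinv v) * (CC (f.coeff m) * dd0Mono 1 v m)
        = AddMonoidAlgebra.single m (f.coeff m) - AddMonoidAlgebra.single (negCoord v m) (f.coeff m) := by
    intro m _
    rw [mul_left_comm, key_mono, mul_sub, CC, AddMonoidAlgebra.single_mul_single,
      AddMonoidAlgebra.single_mul_single, zero_add, zero_add, mul_one, negCoord_apply]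
  rw [Finsupp.sum_congr
    (g2 := fun m c => (AddMonoidAlgebra.single m c : Lp K N) - AddMonoidAlgebra.single (negCoord v m) c) hstep,
    Finsupp.sum_sub]
  congr 1
  exact AddMonoidAlgebra.sum_coeff_single f
  rw [AddMonoidAlgebra.mapDomain, Finsupp.mapDomain, AddMonoidAlgebra.ofCoeff_finsuppSum]
  rfl

lemma zsub_ne (v : Fin N) : (Z v - Zinv v : Lp K N) ≠ 0 := by
  intro h
  have h1 : (Pi.single v (-1 : ℤ) : Fin N → ℤ) ≠ Pi.single v 1 := by
    intro h
    have := congrFun h v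
    simp at this
  have h2 : (Z v - Zinv v : Lp K N).coeff (Pi.single v 1) = 0 := by rw [h]; rfl
  rw [AddMonoidAlgebra.coeff_sub, Finsupp.sub_apply, Z, Zinv] at h2
  simp [AddMonoidAlgebra.coeff_single, Finsupp.single_apply, h1] at h2

lemma SvSv (v : Fin N) (f : Lp K N) :
    (AddMonoidAlgebra.domCongr K K (negCoord v))
      ((AddMonoidAlgebra.domCongr K K (negCoord v)) f) = f := by
  rw [domCongr_eq_mapDomain, domCongr_eq_mapDomain]
  simp only [AddMonoidAlgebra.mapDomain, AddMonoidAlgebra.coeff_ofCoeff]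
  rw [← Finsupp.mapDomain_comp]
  have hcomp : (negCoord v : (Fin N → ℤ) → (Fin N → ℤ)) ∘ (negCoord v) = id := by
    funext m
    exact (negCoord v).left_inv m
  rw [hcomp, Finsupp.mapDomain_id, AddMonoidAlgebra.ofCoeff_coeff]

lemma Sv_CC (v : Fin N) (c : K) :
    (AddMonoidAlgebra.domCongr K K (negCoord v)) (CC c) = (CC c : Lp K N) := by
  rw [CC, AddMonoidAlgebra.domCongr_single, map_zero]

lemma Sv_Z (v : Fin N) :
    (AddMonoidAlgebra.domCongr K K (negCoord v)) (Z v) = (Zinv v : Lp K N) := by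
  rw [Z, AddMonoidAlgebra.domCongr_single, Zinv]
  congr 1
  funext i
  rcases eq_or_ne i v with rfl | h
  · simp [negCoord_apply]
  · simp [negCoord_apply, Function.update_of_ne h, Pi.single_eq_of_ne h]

lemma Sv_Zinv (v : Fin N) :
    (AddMonoidAlgebra.domCongr K K (negCoord v)) (Zinv v) = (Z v : Lp K N) := by
  rw [Zinv, AddMonoidAlgebra.domCongr_single, Z]
  congr 1
  funext i
  rcases eq_or_ne i v with rfl | h
  · simp [negCoord_apply]
  · simp [negCoord_apply, Function.update_of_ne h, Pi.single_eq_of_ne h]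

lemma Sv_dd0 (v : Fin N) (f : Lp K N) :
    (AddMonoidAlgebra.domCongr K K (negCoord v)) (dd0 1 v f) = dd0 1 v f := by
  have h2 := congrArg (AddMonoidAlgebra.domCongr K K (negCoord v)) (key v f)
  rw [map_mul, map_sub, map_sub, Sv_Z, Sv_Zinv, SvSv] at h2
  exact mul_left_cancel₀ (zsub_ne v) (by linear_combination -h2 - key v f)

theorem TN_hecke (b d : K) (v : Fin N) (f : Lp K N) :
    TN b d v (TN b d v f + f) - CC (-(b * d)) * (TN b d v f + f) = 0 := by
  set Sv := AddMonoidAlgebra.domCongr K K (negCoord v) with hSv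
  have hneg : (CC (-(b * d)) : Lp K N) = -CC (b * d) := by
    rw [CC, CC]; exact AddMonoidAlgebra.single_neg 0 (b * d)
  have hsymm : Sv (TN b d v f + f) = TN b d v f + f := by
    rw [TN, map_add, map_add, map_mul, map_mul, map_add, map_sub, map_mul,
      Sv_CC, Sv_CC, Sv_CC, Sv_Z, Sv_Zinv, Sv_dd0]
    linear_combination (CC (-(b * d)) + 1) * key v f -
      (Z v - Zinv v) * (dd0 1 v f) * hneg
  have hker : dd0 1 v (TN b d v f + f) = 0 := by
    have hk := key v (TN b d v f + f)
    rw [hsymm, sub_self] at hk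
    rcases mul_eq_zero.mp hk with h | h
    · exact absurd h (zsub_ne v)
    · exact h
  rw [TN, hker]
  ring

/-- The Noumi operator `T̃_N` satisfies the quadratic Hecke relation
`(T̃_N - t_N·id) ∘ (T̃_N + id) = 0` on Laurent polynomials, where `t_N = -bd`. -/
theorem statement2 (N : ℕ) (hN : 1 ≤ N) (f : Lp K6 N) :
    TN pB pD ⟨N - 1, by omega⟩ (TN pB pD ⟨N - 1, by omega⟩ f + f) -
      CC (-(pB * pD)) * (TN pB pD ⟨N - 1, by omega⟩ f + f) = 0 :=
  TN_hecke pB pD _ f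

end RST
end
end

section
/- Let x be a word in {∘, ∗, ●} = {−1, 0, 1} of length N−1. Then q·T̃_0(F_{∘x}(z; t)) = F_{●x}(z; t), where ∘x and ●x denote the length-N words with first entry −1 (resp. 1) followed by x. -/
open scoped BigOperators
open Finset

noncomputable section

namespace RST

open Finset

variable {s : ℤ} {w : List ℤ}

instance instNZlen (s : ℤ) (w : List ℤ) : NeZero (s::w).length := ⟨Nat.succ_ne_zero _⟩

@[simp] lemma get_cons_zero' (s : ℤ) (w : List ℤ) :
    (s::w).get (0 : Fin (s::w).length) = s := rfl

@[simp] lemma get_cons_succ' (s : ℤ) (w : List ℤ) (i : Fin w.length) :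
    (s::w).get i.succ = w.get i := rfl

/-- restriction of a filling of `s::w` to a filling of `w`. -/
def res (s : ℤ) (w : List ℤ) (f : Filling (s::w)) : Filling w := fun i j => f i.succ j.succ

lemma isTile_succ {i j : Fin w.length} :
    IsTile (s::w) i.succ j.succ ↔ IsTile w i j :=
  and_congr (Fin.succ_le_succ_iff) Iff.rfl

lemma isTile_zero (hs : s ≠ 0) (j : Fin (s::w).length) : IsTile (s::w) 0 j := by
  refine ⟨Fin.zero_le _, ?_⟩
  rintro ⟨h, -⟩
  exact hs h

lemma not_isTile_succ_zero (i : Fin w.length) : ¬ IsTile (s::w) i.succ 0 := by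
  rintro ⟨h, -⟩
  exact Fin.succ_ne_zero i (Fin.le_zero_iff.mp h)

lemma colAbove_succ {i j : Fin w.length} :
    ColAbove (s::w) i.succ j.succ ↔ ColAbove w i j := by
  unfold ColAbove
  simp only [get_cons_succ', Fin.succ_lt_succ_iff]

lemma colAbove_zero_succ (hs : s ≠ 0) {i : Fin w.length} :
    ColAbove (s::w) (0 : Fin (s::w).length) i.succ ↔ w.get i ≠ 0 := by
  unfold ColAbove
  simp [hs, Fin.succ_pos]

lemma colAbove_succ_zero (hs : s ≠ 0) {i : Fin w.length} :
    ColAbove (s::w) i.succ (0 : Fin (s::w).length) ↔ w.get i = 0 := by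
  unfold ColAbove
  simp [hs, Fin.not_lt_zero]

lemma not_colAbove_zero_zero (hs : s ≠ 0) :
    ¬ ColAbove (s::w) (0 : Fin (s::w).length) 0 := by
  unfold ColAbove
  simp [hs]

lemma seesRight_succ (f : Filling (s::w)) (i j : Fin w.length) (g : Greek) :
    SeesRight (s::w) f i.succ j.succ g ↔ SeesRight w (res s w f) i j g := by
  constructor
  · rintro ⟨j', h1, h2, h3, h4⟩
    rcases Fin.eq_zero_or_eq_succ j' with rfl | ⟨k, rfl⟩
    · exact absurd (Fin.le_zero_iff.mp h1) (Fin.succ_ne_zero i)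
    · exact ⟨k, Fin.succ_le_succ_iff.mp h1, Fin.succ_lt_succ_iff.mp h2, h3,
        fun m hm1 hm2 => h4 m.succ (Fin.succ_lt_succ_iff.mpr hm1) (Fin.succ_lt_succ_iff.mpr hm2)⟩
  · rintro ⟨k, h1, h2, h3, h4⟩
    refine ⟨k.succ, Fin.succ_le_succ_iff.mpr h1, Fin.succ_lt_succ_iff.mpr h2, h3, ?_⟩
    intro j'' hj1 hj2
    rcases Fin.eq_zero_or_eq_succ j'' with rfl | ⟨m, rfl⟩
    · exact absurd hj1 (Fin.not_lt_zero _)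
    · exact h4 m (Fin.succ_lt_succ_iff.mp hj1) (Fin.succ_lt_succ_iff.mp hj2)

lemma seesRight_zero (f : Filling (s::w)) {g0 : Greek} (hg0 : f 0 0 = some g0)
    (hrow : ∀ k : Fin w.length, f 0 k.succ = none) (j : Fin w.length) (g : Greek) :
    SeesRight (s::w) f 0 j.succ g ↔ g = g0 := by
  constructor
  · rintro ⟨j', -, h2, h3, -⟩
    rcases Fin.eq_zero_or_eq_succ j' with rfl | ⟨k, rfl⟩
    · rw [hg0] at h3; exact (Option.some_inj.mp h3).symm
    · rw [hrow k] at h3; exact absurd h3 (by simp)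
  · rintro rfl
    refine ⟨0, Fin.zero_le _, Fin.succ_pos _, hg0, ?_⟩
    intro j'' hj1 _
    rcases Fin.eq_zero_or_eq_succ j'' with rfl | ⟨m, rfl⟩
    · exact absurd hj1 (lt_irrefl _)
    · exact hrow m

lemma seesBelow_succ (f : Filling (s::w)) {i j : Fin w.length}
    (h0 : f 0 j.succ = none) (g : Greek) :
    SeesBelow (s::w) f i.succ j.succ g ↔ SeesBelow w (res s w f) i j g := by
  constructor
  · rintro ⟨i', ht, ha, h3, h4⟩
    rcases Fin.eq_zero_or_eq_succ i' with rfl | ⟨k, rfl⟩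
    · rw [h0] at h3; exact absurd h3 (by simp)
    · refine ⟨k, isTile_succ.mp ht, colAbove_succ.mp ha, h3, ?_⟩
      intro m hm1 hm2 hm3
      exact h4 m.succ (isTile_succ.mpr hm1) (colAbove_succ.mpr hm2) (colAbove_succ.mpr hm3)
  · rintro ⟨k, ht, ha, h3, h4⟩
    refine ⟨k.succ, isTile_succ.mpr ht, colAbove_succ.mpr ha, h3, ?_⟩
    intro i'' h1 h2 h3'
    rcases Fin.eq_zero_or_eq_succ i'' with rfl | ⟨m, rfl⟩
    · exact h0
    · exact h4 m (isTile_succ.mp h1) (colAbove_succ.mp h2) (colAbove_succ.mp h3')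

variable {R : Type*} [CommRing R]

lemma tileWt_not_tile (pa pb pg pd pt : R) {w : List ℤ} {f : Filling w} {i j : Fin w.length}
    (h : ¬ IsTile w i j) : tileWt pa pb pg pd pt w f i j = 1 := by
  unfold tileWt; rw [if_pos h]

lemma tileWt_succ (pa pb pg pd pt : R) (f : Filling (s::w))
    (hrow : ∀ k : Fin w.length, f 0 k.succ = none) (i j : Fin w.length) :
    tileWt pa pb pg pd pt (s::w) f i.succ j.succ = tileWt pa pb pg pd pt w (res s w f) i j := by
  have hres : res s w f i j = f i.succ j.succ := rfl
  unfold tileWt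
  by_cases ht : IsTile w i j
  · rw [if_neg (not_not_intro (isTile_succ.mpr ht)), if_neg (not_not_intro ht), hres]
    cases hv : f i.succ j.succ with
    | some g => cases g <;> simp
    | none =>
      rw [seesRight_succ f i j Greek.B, seesRight_succ f i j Greek.A,
        seesRight_succ f i j Greek.G, seesBelow_succ f (hrow j) Greek.A,
        seesBelow_succ f (hrow j) Greek.B, seesBelow_succ f (hrow j) Greek.D]
      rfl
  · rw [if_pos (fun hh => ht (isTile_succ.mp hh)), if_pos ht]

def gwt (pa pb pg pd : R) : Greek → R
  | Greek.A => pa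
  | Greek.B => pb
  | Greek.G => pg
  | Greek.D => pd

lemma tileWt_zero_zero (pa pb pg pd pt : R) (hs : s ≠ 0) (f : Filling (s::w)) (g : Greek)
    (h : f 0 0 = some g) :
    tileWt pa pb pg pd pt (s::w) f 0 0 = gwt pa pb pg pd g := by
  cases g <;>
  · unfold tileWt
    rw [if_neg (not_not_intro (isTile_zero hs 0)), h]
    simp [hs, gwt]

lemma tileWt_zero_succ_D (pa pb pg pd pt : R) (hs : s ≠ 0) (f : Filling (s::w))
    (h00 : f 0 0 = some Greek.D) (hrow : ∀ k : Fin w.length, f 0 k.succ = none)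
    (j : Fin w.length) :
    tileWt pa pb pg pd pt (s::w) f 0 j.succ = 1 := by
  unfold tileWt
  rw [if_neg (not_not_intro (isTile_zero hs _)), hrow j]
  rw [seesRight_zero f h00 hrow j Greek.B, seesRight_zero f h00 hrow j Greek.A,
    seesRight_zero f h00 hrow j Greek.G]
  by_cases hj : w.get j = 0 <;> simp [hs, hj]

lemma tileWt_zero_succ_B (pa pb pg pd pt : R) (hs : s ≠ 0) (f : Filling (s::w))
    (h00 : f 0 0 = some Greek.B) (hrow : ∀ k : Fin w.length, f 0 k.succ = none)
    (j : Fin w.length) :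
    tileWt pa pb pg pd pt (s::w) f 0 j.succ = if w.get j = 0 then pt^2 else pt := by
  unfold tileWt
  rw [if_neg (not_not_intro (isTile_zero hs _)), hrow j]
  rw [seesRight_zero f h00 hrow j Greek.B, seesRight_zero f h00 hrow j Greek.A,
    seesRight_zero f h00 hrow j Greek.G]
  by_cases hj : w.get j = 0 <;> simp [hs, hj]

lemma wt_split (pa pb pg pd pt : R) (f : Filling (s::w)) :
    wt pa pb pg pd pt (s::w) f =
      tileWt pa pb pg pd pt (s::w) f 0 0 *
        ((∏ j : Fin w.length, tileWt pa pb pg pd pt (s::w) f 0 j.succ) *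
         ∏ i : Fin w.length, ∏ j : Fin (s::w).length, tileWt pa pb pg pd pt (s::w) f i.succ j) := by
  have h1 : wt pa pb pg pd pt (s::w) f
      = (∏ j : Fin (s::w).length, tileWt pa pb pg pd pt (s::w) f 0 j)
        * ∏ i : Fin w.length, ∏ j : Fin (s::w).length, tileWt pa pb pg pd pt (s::w) f i.succ j :=
    Fin.prod_univ_succ (fun i : Fin (w.length+1) =>
      ∏ j : Fin (s::w).length, tileWt pa pb pg pd pt (s::w) f i j)
  have h2 : (∏ j : Fin (s::w).length, tileWt pa pb pg pd pt (s::w) f 0 j)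
      = tileWt pa pb pg pd pt (s::w) f 0 0
        * ∏ j : Fin w.length, tileWt pa pb pg pd pt (s::w) f 0 j.succ :=
    Fin.prod_univ_succ (fun j : Fin (w.length+1) => tileWt pa pb pg pd pt (s::w) f 0 j)
  rw [h1, h2, mul_assoc]

lemma prod_succ_res (pa pb pg pd pt : R) (f : Filling (s::w))
    (hrow : ∀ k : Fin w.length, f 0 k.succ = none) :
    (∏ i : Fin w.length, ∏ j : Fin (s::w).length, tileWt pa pb pg pd pt (s::w) f i.succ j)
      = wt pa pb pg pd pt w (res s w f) := by
  unfold wt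
  refine Finset.prod_congr rfl fun i _ => ?_
  refine ((Fin.prod_univ_succ
    (fun j : Fin (w.length+1) => tileWt pa pb pg pd pt (s::w) f i.succ j)).trans ?_)
  rw [tileWt_not_tile pa pb pg pd pt (not_isTile_succ_zero i), one_mul]
  exact Finset.prod_congr rfl fun j _ => tileWt_succ pa pb pg pd pt f hrow i j

lemma card_zeros (w : List ℤ) :
    (Finset.univ.filter (fun j : Fin w.length => w.get j = 0)).card = nzeros w := by
  induction w with
  | nil => rfl
  | cons a w ih =>
    rw [Finset.card_filter]
    have h := Fin.sum_univ_succ (fun i : Fin (w.length+1) =>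
      if (a::w).get i = 0 then (1:ℕ) else 0)
    refine ((show (∑ i : Fin (a::w).length, if (a::w).get i = 0 then (1:ℕ) else 0) = _ from h).trans ?_)
    have hz : ∀ i : Fin w.length, ((if (a::w).get i.succ = 0 then (1:ℕ) else 0))
        = if w.get i = 0 then (1:ℕ) else 0 := fun i => rfl
    rw [Finset.sum_congr rfl (fun i _ => hz i), ← Finset.card_filter, ih]
    have hget : ((a::w).get (0 : Fin (w.length+1)) : ℤ) = a := rfl
    rw [hget]
    simp only [nzeros, List.count_cons]
    rcases eq_or_ne a 0 with rfl | ha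
    · simp [add_comm]
    · simp [ha, Ne.symm ha]

lemma prod_row_wt (pt : R) (w : List ℤ) :
    (∏ j : Fin w.length, if w.get j = 0 then pt^2 else pt) = pt ^ (w.length + nzeros w) := by
  rw [Finset.prod_ite]
  simp only [Finset.prod_const]
  rw [card_zeros]
  have hcard : (Finset.univ.filter (fun j : Fin w.length => ¬ w.get j = 0)).card
      = w.length - nzeros w := by
    rw [Finset.filter_not, Finset.card_sdiff_of_subset (Finset.filter_subset _ _), card_zeros]
    simp
  rw [hcard, ← pow_mul, ← pow_add]
  congr 1
  have h2 : nzeros w ≤ w.length := by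
    rw [← card_zeros w]
    exact (Finset.card_filter_le _ _).trans (by simp)
  omega

/-! ### extension of fillings, and `IsRST` transfer -/

def ext (s : ℤ) (w : List ℤ) (o : Option Greek) (g : Filling w) : Filling (s::w) := fun i j =>
  Fin.cases (Fin.cases o (fun _ => none) j) (fun i' => Fin.cases none (fun j' => g i' j') j) i

@[simp] lemma ext_zero_zero (o : Option Greek) (g : Filling w) : ext s w o g 0 0 = o := rfl

@[simp] lemma ext_zero_succ (o : Option Greek) (g : Filling w) (j : Fin w.length) :
    ext s w o g 0 j.succ = none := by simp [ext]

@[simp] lemma ext_succ_zero (o : Option Greek) (g : Filling w) (i : Fin w.length) :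
    ext s w o g i.succ 0 = none := by simp [ext]

@[simp] lemma ext_succ_succ (o : Option Greek) (g : Filling w) (i j : Fin w.length) :
    ext s w o g i.succ j.succ = g i j := by simp [ext]

lemma res_ext (o : Option Greek) (g : Filling w) : res s w (ext s w o g) = g := by
  funext i j; simp [res]

lemma isRST_res (f : Filling (s::w)) (hf : IsRST (s::w) f) : IsRST w (res s w f) := by
  obtain ⟨c1, c2, c3, c4, c5, c6, c7⟩ := hf
  exact ⟨fun i j h => c1 i.succ j.succ (fun ht => h (isTile_succ.mp ht)),
    fun j hj => c2 j.succ hj,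
    fun j hj => c3 j.succ hj,
    fun i j hj => c4 i.succ j.succ hj,
    fun i j hi => c5 i.succ j.succ hi,
    fun i j i' hAG ht ha => c6 i.succ j.succ i'.succ hAG (isTile_succ.mpr ht) (colAbove_succ.mpr ha),
    fun i j j' hBD hlt ht => c7 i.succ j.succ j'.succ hBD (Fin.succ_lt_succ_iff.mpr hlt)
      (isTile_succ.mpr ht)⟩

lemma row0_none (hs : s ≠ 0) (f : Filling (s::w)) (hf : IsRST (s::w) f)
    (h00 : f 0 0 = some Greek.B ∨ f 0 0 = some Greek.D) (k : Fin w.length) :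
    f 0 k.succ = none :=
  hf.2.2.2.2.2.2 0 0 k.succ h00 (Fin.succ_pos k) (isTile_zero hs k.succ)

lemma col0_none (f : Filling (s::w)) (hf : IsRST (s::w) f) (i : Fin w.length) :
    f i.succ 0 = none :=
  hf.1 i.succ 0 (not_isTile_succ_zero i)

lemma eq_ext (hs : s ≠ 0) (f : Filling (s::w)) (hf : IsRST (s::w) f) (o : Option Greek)
    (h00 : f 0 0 = o) (hBD : o = some Greek.B ∨ o = some Greek.D) :
    f = ext s w o (res s w f) := by
  funext i j
  obtain rfl | ⟨i', rfl⟩ := Fin.eq_zero_or_eq_succ i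
  · obtain rfl | ⟨j', rfl⟩ := Fin.eq_zero_or_eq_succ j
    · simpa using h00
    · rw [ext_zero_succ, row0_none hs f hf (by rw [h00]; exact hBD) j']
  · obtain rfl | ⟨j', rfl⟩ := Fin.eq_zero_or_eq_succ j
    · rw [ext_succ_zero, col0_none f hf i']
    · rw [ext_succ_succ]; rfl

lemma isRST_ext (hs : s ≠ 0) (o : Option Greek)
    (hBD : o = some Greek.B ∨ o = some Greek.D)
    (hb1 : s = -1 → o = some Greek.B ∨ o = some Greek.G)
    (hb2 : s = 1 → o = some Greek.A ∨ o = some Greek.D)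
    (g : Filling w) (hg : IsRST w g) : IsRST (s::w) (ext s w o g) := by
  obtain ⟨c1, c2, c3, c4, c5, c6, c7⟩ := hg
  refine ⟨?_, ?_, ?_, ?_, ?_, ?_, ?_⟩
  · intro i j h
    obtain rfl | ⟨i', rfl⟩ := Fin.eq_zero_or_eq_succ i
    · obtain rfl | ⟨j', rfl⟩ := Fin.eq_zero_or_eq_succ j
      · exact absurd (isTile_zero hs 0) h
      · simp
    · obtain rfl | ⟨j', rfl⟩ := Fin.eq_zero_or_eq_succ j
      · simp
      · rw [ext_succ_succ]
        exact c1 i' j' (fun ht => h (isTile_succ.mpr ht))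
  · intro j hj
    obtain rfl | ⟨j', rfl⟩ := Fin.eq_zero_or_eq_succ j
    · rw [ext_zero_zero]; exact hb1 hj
    · rw [ext_succ_succ]; exact c2 j' hj
  · intro j hj
    obtain rfl | ⟨j', rfl⟩ := Fin.eq_zero_or_eq_succ j
    · rw [ext_zero_zero]
      rcases hb2 hj with h | h
      · exact Or.inl h
      · exact Or.inr h
    · rw [ext_succ_succ]; exact c3 j' hj
  · intro i j hj
    obtain rfl | ⟨j', rfl⟩ := Fin.eq_zero_or_eq_succ j
    · exact absurd hj hs
    · obtain rfl | ⟨i', rfl⟩ := Fin.eq_zero_or_eq_succ i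
      · simp
      · rw [ext_succ_succ]; exact c4 i' j' hj
  · intro i j hi
    obtain rfl | ⟨i', rfl⟩ := Fin.eq_zero_or_eq_succ i
    · exact absurd hi hs
    · obtain rfl | ⟨j', rfl⟩ := Fin.eq_zero_or_eq_succ j
      · simp
      · rw [ext_succ_succ]; exact c5 i' j' hi
  · intro i j i' hAG ht ha
    obtain rfl | ⟨i0, rfl⟩ := Fin.eq_zero_or_eq_succ i
    · obtain rfl | ⟨j0, rfl⟩ := Fin.eq_zero_or_eq_succ j
      · rw [ext_zero_zero] at hAG
        rcases hBD with rfl | rfl <;> rcases hAG with h | h <;> simp at h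
      · rw [ext_zero_succ] at hAG
        rcases hAG with h | h <;> simp at h
    · obtain rfl | ⟨j0, rfl⟩ := Fin.eq_zero_or_eq_succ j
      · rw [ext_succ_zero] at hAG
        rcases hAG with h | h <;> simp at h
      · rw [ext_succ_succ] at hAG
        obtain rfl | ⟨i1, rfl⟩ := Fin.eq_zero_or_eq_succ i'
        · simp
        · rw [ext_succ_succ]
          exact c6 i0 j0 i1 hAG (isTile_succ.mp ht) (colAbove_succ.mp ha)
  · intro i j j' hBD' hlt ht
    obtain rfl | ⟨i0, rfl⟩ := Fin.eq_zero_or_eq_succ i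
    · obtain rfl | ⟨j0, rfl⟩ := Fin.eq_zero_or_eq_succ j
      · obtain rfl | ⟨j1, rfl⟩ := Fin.eq_zero_or_eq_succ j'
        · exact absurd hlt (lt_irrefl _)
        · simp
      · rw [ext_zero_succ] at hBD'
        rcases hBD' with h | h <;> simp at h
    · obtain rfl | ⟨j0, rfl⟩ := Fin.eq_zero_or_eq_succ j
      · rw [ext_succ_zero] at hBD'
        rcases hBD' with h | h <;> simp at h
      · rw [ext_succ_succ] at hBD'
        obtain rfl | ⟨j1, rfl⟩ := Fin.eq_zero_or_eq_succ j'
        · exact absurd hlt (Fin.not_lt_zero _)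
        · rw [ext_succ_succ]
          exact c7 i0 j0 j1 hBD' (Fin.succ_lt_succ_iff.mp hlt) (isTile_succ.mp ht)

/-! ### the `α ↔ γ` switch at the corner -/

variable {s1 s2 : ℤ}

def phi (s1 s2 : ℤ) (w : List ℤ) (g2 : Greek) (f : Filling (s1::w)) : Filling (s2::w) :=
  fun i j => if i = 0 ∧ j = 0 then some g2 else f i j

@[simp] lemma phi_zero_zero (g2 : Greek) (f : Filling (s1::w)) :
    phi s1 s2 w g2 f 0 0 = some g2 := by simp [phi]

lemma phi_ne (g2 : Greek) (f : Filling (s1::w)) {i j : Fin (s2::w).length}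
    (h : ¬(i = 0 ∧ j = 0)) : phi s1 s2 w g2 f i j = f i j := by
  simp [phi, h]

lemma get_eq_zero_iff (hs1 : s1 ≠ 0) (hs2 : s2 ≠ 0) (k : Fin (s1::w).length) :
    ((s1::w).get k = 0) ↔ ((s2::w).get k = 0) := by
  obtain rfl | ⟨k', rfl⟩ := Fin.eq_zero_or_eq_succ k
  · exact iff_of_false hs1 hs2
  · exact Iff.rfl

lemma isTile_ss (hs1 : s1 ≠ 0) (hs2 : s2 ≠ 0) {i j : Fin (s1::w).length} :
    IsTile (s1::w) i j ↔ IsTile (s2::w) i j := by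
  unfold IsTile
  rw [get_eq_zero_iff hs1 hs2 i, get_eq_zero_iff hs1 hs2 j]

lemma colAbove_ss (hs1 : s1 ≠ 0) (hs2 : s2 ≠ 0) {i j : Fin (s1::w).length} :
    ColAbove (s1::w) i j ↔ ColAbove (s2::w) i j := by
  unfold ColAbove
  simp only [ne_eq]
  rw [get_eq_zero_iff hs1 hs2 i, get_eq_zero_iff hs1 hs2 j]

lemma seesRight_congr (f : Filling (s1::w)) (f' : Filling (s2::w))
    {i j : Fin (s1::w).length} (hrow : ∀ q, f i q = f' i q) (g : Greek) :
    SeesRight (s1::w) f i j g ↔ SeesRight (s2::w) f' i j g := by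
  unfold SeesRight
  refine exists_congr fun j' => and_congr Iff.rfl (and_congr Iff.rfl (and_congr (by rw [hrow j'])
    (forall_congr' fun j'' => imp_congr Iff.rfl (imp_congr Iff.rfl (by rw [hrow j''])))))

lemma seesBelow_congr (hs1 : s1 ≠ 0) (hs2 : s2 ≠ 0) (f : Filling (s1::w)) (f' : Filling (s2::w))
    {i j : Fin (s1::w).length} (hcol : ∀ p, f p j = f' p j) (g : Greek) :
    SeesBelow (s1::w) f i j g ↔ SeesBelow (s2::w) f' i j g := by
  unfold SeesBelow
  refine exists_congr fun i' => and_congr (isTile_ss hs1 hs2) (and_congr (colAbove_ss hs1 hs2)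
    (and_congr (by rw [hcol i']) (forall_congr' fun i'' => imp_congr (isTile_ss hs1 hs2)
      (imp_congr (colAbove_ss hs1 hs2) (imp_congr (colAbove_ss hs1 hs2) (by rw [hcol i'']))))))

lemma seesRight_phi_B {g1 g2 : Greek} (hg1 : g1 = Greek.A ∨ g1 = Greek.G)
    (hg2 : g2 = Greek.A ∨ g2 = Greek.G) (f : Filling (s1::w)) (h00 : f 0 0 = some g1)
    (j : Fin (s1::w).length) :
    SeesRight (s1::w) f 0 j Greek.B ↔ SeesRight (s2::w) (phi s1 s2 w g2 f) 0 j Greek.B := by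
  unfold SeesRight
  refine exists_congr fun j' => and_congr Iff.rfl (and_congr Iff.rfl (and_congr ?_
    (forall_congr' fun j'' => imp_congr Iff.rfl (imp_congr Iff.rfl ?_))))
  · by_cases hj' : j' = 0
    · subst hj'
      rw [h00, phi_zero_zero]
      constructor <;> intro h <;>
        [(rcases hg1 with rfl | rfl <;> simp at h); (rcases hg2 with rfl | rfl <;> simp at h)]
    · rw [phi_ne (s2 := s2) g2 f (fun hh => hj' hh.2)]
  · by_cases hj'' : j'' = 0
    · subst hj''
      rw [h00, phi_zero_zero]
      simp
    · rw [phi_ne (s2 := s2) g2 f (fun hh => hj'' hh.2)]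

lemma seesRight_phi_AG {g1 g2 : Greek} (hg1 : g1 = Greek.A ∨ g1 = Greek.G)
    (hg2 : g2 = Greek.A ∨ g2 = Greek.G) (f : Filling (s1::w)) (h00 : f 0 0 = some g1)
    (j : Fin (s1::w).length) :
    (SeesRight (s1::w) f 0 j Greek.A ∨ SeesRight (s1::w) f 0 j Greek.G) ↔
      (SeesRight (s2::w) (phi s1 s2 w g2 f) 0 j Greek.A ∨
       SeesRight (s2::w) (phi s1 s2 w g2 f) 0 j Greek.G) := by
  have hnone : ∀ j'' : Fin (s1::w).length, j'' ≠ 0 →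
      (f 0 j'' = none ↔ phi s1 s2 w g2 f 0 j'' = none) := by
    intro j'' h
    rw [phi_ne (s2 := s2) g2 f (fun hh => h hh.2)]
  constructor
  · rintro (⟨j', h1, h2, h3, h4⟩ | ⟨j', h1, h2, h3, h4⟩) <;>
    · by_cases hj' : j' = 0
      · subst hj'
        have h4' : ∀ j'' : Fin (s2::w).length, (0:Fin (s2::w).length) < j'' → j'' < j →
            phi s1 s2 w g2 f 0 j'' = none := fun j'' ha hb =>
          (hnone j'' (fun hh => absurd (hh ▸ ha) (lt_irrefl _))).mp (h4 j'' ha hb)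
        rcases hg2 with rfl | rfl
        · exact Or.inl ⟨0, h1, h2, phi_zero_zero _ f, h4'⟩
        · exact Or.inr ⟨0, h1, h2, phi_zero_zero _ f, h4'⟩
      · have h4' : ∀ j'' : Fin (s2::w).length, j' < j'' → j'' < j →
            phi s1 s2 w g2 f 0 j'' = none := fun j'' ha hb =>
          (hnone j'' (fun hh => absurd (hh ▸ ha) (Fin.not_lt_zero _))).mp (h4 j'' ha hb)
        first
        | exact Or.inl ⟨j', h1, h2, (phi_ne (s2 := s2) g2 f (fun hh => hj' hh.2)).symm ▸ h3, h4'⟩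
        | exact Or.inr ⟨j', h1, h2, (phi_ne (s2 := s2) g2 f (fun hh => hj' hh.2)).symm ▸ h3, h4'⟩
  · rintro (⟨j', h1, h2, h3, h4⟩ | ⟨j', h1, h2, h3, h4⟩) <;>
    · by_cases hj' : j' = 0
      · subst hj'
        have h4' : ∀ j'' : Fin (s1::w).length, (0:Fin (s1::w).length) < j'' → j'' < j →
            f 0 j'' = none := fun j'' ha hb =>
          (hnone j'' (fun hh => absurd (hh ▸ ha) (lt_irrefl _))).mpr (h4 j'' ha hb)
        rcases hg1 with rfl | rfl
        · exact Or.inl ⟨0, h1, h2, h00, h4'⟩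
        · exact Or.inr ⟨0, h1, h2, h00, h4'⟩
      · have h4' : ∀ j'' : Fin (s1::w).length, j' < j'' → j'' < j →
            f 0 j'' = none := fun j'' ha hb =>
          (hnone j'' (fun hh => absurd (hh ▸ ha) (Fin.not_lt_zero _))).mpr (h4 j'' ha hb)
        have h3' : f 0 j' = some _ := (phi_ne (s2 := s2) g2 f (fun hh => hj' hh.2)) ▸ h3
        first
        | exact Or.inl ⟨j', h1, h2, h3', h4'⟩
        | exact Or.inr ⟨j', h1, h2, h3', h4'⟩

lemma tileWt_phi (pa pb pg pd pt : R) (hs1 : s1 ≠ 0) (hs2 : s2 ≠ 0) {g1 g2 : Greek}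
    (hg1 : g1 = Greek.A ∨ g1 = Greek.G) (hg2 : g2 = Greek.A ∨ g2 = Greek.G)
    (f : Filling (s1::w)) (h00 : f 0 0 = some g1) (i j : Fin (s1::w).length)
    (hij : ¬(i = 0 ∧ j = 0)) :
    tileWt pa pb pg pd pt (s1::w) f i j = tileWt pa pb pg pd pt (s2::w) (phi s1 s2 w g2 f) i j := by
  classical
  by_cases ht : IsTile (s1::w) i j
  · unfold tileWt
    rw [if_neg (not_not_intro ht), if_neg (not_not_intro ((isTile_ss hs1 hs2).mp ht))]
    rw [phi_ne (s2 := s2) g2 f hij]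
    obtain rfl | ⟨j0, rfl⟩ := Fin.eq_zero_or_eq_succ j
    · -- column 0: only the corner tile, excluded; i ≤ 0 forces i = 0
      exact absurd ⟨Fin.le_zero_iff.mp ht.1, rfl⟩ hij
    · obtain rfl | ⟨i0, rfl⟩ := Fin.eq_zero_or_eq_succ i
      · -- row 0
        cases hv : f 0 j0.succ with
        | some g =>
          cases g
          · rw [if_neg (show ¬ (s1::w).get (0 : Fin (s1::w).length) = 0 from hs1),
              if_neg (show ¬ (s2::w).get (0 : Fin (s2::w).length) = 0 from hs2)]
          · rfl
          · rfl
          · rfl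
        | none =>
          have hcol : ∀ p, f p j0.succ = phi s1 s2 w g2 f p j0.succ :=
            fun p => (phi_ne (s2 := s2) g2 f (fun hh => Fin.succ_ne_zero j0 hh.2)).symm
          have hrow0 : ∀ q, SeesRight (s1::w) f 0 q Greek.B ↔
              SeesRight (s2::w) (phi s1 s2 w g2 f) 0 q Greek.B :=
            seesRight_phi_B hg1 hg2 f h00
          by_cases hm : w.get j0 = 0
          · rw [if_pos (show (s1::w).get (0:Fin (s1::w).length) ≠ 0 ∧ (s1::w).get j0.succ = 0
                from ⟨hs1, hm⟩),
              if_pos (show (s2::w).get (0:Fin (s2::w).length) ≠ 0 ∧ (s2::w).get j0.succ = 0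
                from ⟨hs2, hm⟩)]
            exact if_congr (hrow0 j0.succ) rfl
              (if_congr (seesRight_phi_AG hg1 hg2 f h00 j0.succ) rfl rfl)
          · rw [if_neg (show ¬((s1::w).get (0:Fin (s1::w).length) ≠ 0 ∧ (s1::w).get j0.succ = 0)
                from fun hh => hm hh.2),
              if_neg (show ¬((s2::w).get (0:Fin (s2::w).length) ≠ 0 ∧ (s2::w).get j0.succ = 0)
                from fun hh => hm hh.2),
              if_neg (show ¬((s1::w).get (0:Fin (s1::w).length) = 0 ∧ (s1::w).get j0.succ ≠ 0)
                from fun hh => hs1 hh.1),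
              if_neg (show ¬((s2::w).get (0:Fin (s2::w).length) = 0 ∧ (s2::w).get j0.succ ≠ 0)
                from fun hh => hs2 hh.1)]
            exact if_congr (or_congr (hrow0 j0.succ)
              (and_congr (seesRight_phi_AG hg1 hg2 f h00 j0.succ)
                (or_congr (seesBelow_congr hs1 hs2 f _ hcol Greek.A)
                  (seesBelow_congr hs1 hs2 f _ hcol Greek.D)))) rfl rfl
      · -- lower rows: full congruence
        have hrow : ∀ q, f i0.succ q = phi s1 s2 w g2 f i0.succ q :=
          fun q => (phi_ne (s2 := s2) g2 f (fun hh => Fin.succ_ne_zero i0 hh.1)).symm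
        have hcol : ∀ p, f p j0.succ = phi s1 s2 w g2 f p j0.succ :=
          fun p => (phi_ne (s2 := s2) g2 f (fun hh => Fin.succ_ne_zero j0 hh.2)).symm
        cases hv : f i0.succ j0.succ with
        | some g => cases g <;> rfl
        | none =>
          exact if_congr Iff.rfl
            (if_congr (seesRight_congr f _ hrow Greek.B) rfl
              (if_congr (or_congr (seesRight_congr f _ hrow Greek.A)
                (seesRight_congr f _ hrow Greek.G)) rfl rfl))
            (if_congr Iff.rfl
              (if_congr (seesBelow_congr hs1 hs2 f _ hcol Greek.A) rfl
                (if_congr (or_congr (seesBelow_congr hs1 hs2 f _ hcol Greek.B)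
                  (seesBelow_congr hs1 hs2 f _ hcol Greek.D)) rfl rfl))
              (if_congr (or_congr (seesRight_congr f _ hrow Greek.B)
                (and_congr (or_congr (seesRight_congr f _ hrow Greek.A)
                  (seesRight_congr f _ hrow Greek.G))
                  (or_congr (seesBelow_congr hs1 hs2 f _ hcol Greek.A)
                    (seesBelow_congr hs1 hs2 f _ hcol Greek.D)))) rfl rfl))
  · rw [tileWt_not_tile pa pb pg pd pt ht,
      tileWt_not_tile pa pb pg pd pt (fun h' => ht ((isTile_ss hs1 hs2).mpr h'))]

lemma isRST_phi (hs1 : s1 ≠ 0) (hs2 : s2 ≠ 0) {g1 g2 : Greek}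
    (hg1 : g1 = Greek.A ∨ g1 = Greek.G) (hg2 : g2 = Greek.A ∨ g2 = Greek.G)
    (hb1 : s2 = -1 → g2 = Greek.B ∨ g2 = Greek.G)
    (hb2 : s2 = 1 → g2 = Greek.A ∨ g2 = Greek.D)
    (f : Filling (s1::w)) (hf : IsRST (s1::w) f) (h00 : f 0 0 = some g1) :
    IsRST (s2::w) (phi s1 s2 w g2 f) := by
  obtain ⟨c1, c2, c3, c4, c5, c6, c7⟩ := hf
  have hsome : ∀ i j : Fin (s1::w).length, f i j ≠ none → IsTile (s1::w) i j :=
    fun i j h => by_contra fun ht => h (c1 i j ht)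
  refine ⟨?_, ?_, ?_, ?_, ?_, ?_, ?_⟩
  · intro i j h
    by_cases hij : i = 0 ∧ j = 0
    · exact absurd (isTile_zero hs2 j) (hij.1 ▸ h)
    · rw [phi_ne (s2 := s2) g2 f hij]
      exact c1 i j (fun ht => h ((isTile_ss hs1 hs2).mp ht))
  · intro j hj
    obtain rfl | ⟨j0, rfl⟩ := Fin.eq_zero_or_eq_succ j
    · rw [phi_zero_zero]
      rcases hb1 hj with rfl | rfl
      · exact Or.inl rfl
      · exact Or.inr rfl
    · rw [phi_ne (s2 := s2) g2 f (fun hh => Fin.succ_ne_zero j0 hh.1)]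
      exact c2 j0.succ hj
  · intro j hj
    obtain rfl | ⟨j0, rfl⟩ := Fin.eq_zero_or_eq_succ j
    · rw [phi_zero_zero]
      rcases hb2 hj with rfl | rfl
      · exact Or.inl rfl
      · exact Or.inr rfl
    · rw [phi_ne (s2 := s2) g2 f (fun hh => Fin.succ_ne_zero j0 hh.1)]
      exact c3 j0.succ hj
  · intro i j hj
    obtain rfl | ⟨j0, rfl⟩ := Fin.eq_zero_or_eq_succ j
    · exact absurd hj hs2
    · rw [phi_ne (s2 := s2) g2 f (fun hh => Fin.succ_ne_zero j0 hh.2)]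
      exact c4 i j0.succ hj
  · intro i j hi
    obtain rfl | ⟨i0, rfl⟩ := Fin.eq_zero_or_eq_succ i
    · exact absurd hi hs2
    · rw [phi_ne (s2 := s2) g2 f (fun hh => Fin.succ_ne_zero i0 hh.1)]
      exact c5 i0.succ j hi
  · intro i j i' hAG ht ha
    obtain rfl | ⟨j0, rfl⟩ := Fin.eq_zero_or_eq_succ j
    · -- column 0 : the only tile is the corner, and nothing is above it
      have : i' = 0 := Fin.le_zero_iff.mp ht.1
      subst this
      obtain rfl | ⟨i0, rfl⟩ := Fin.eq_zero_or_eq_succ i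
      · exact absurd ((colAbove_ss hs2 hs1).mp ha) (not_colAbove_zero_zero hs1)
      · -- source (i0.succ, 0) must be a tile, impossible unless none
        have := phi_ne (s2 := s2) g2 f
          (fun hh => Fin.succ_ne_zero i0 hh.1) ▸ hAG
        rcases this with h | h
        · have := hsome i0.succ 0 (by rw [h]; simp)
          exact absurd this (not_isTile_succ_zero i0)
        · have := hsome i0.succ 0 (by rw [h]; simp)
          exact absurd this (not_isTile_succ_zero i0)
    · by_cases hi' : i' = 0 ∧ j0.succ = (0 : Fin (s2::w).length)
      · exact absurd hi'.2 (Fin.succ_ne_zero j0)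
      · rw [phi_ne (s2 := s2) g2 f hi']
        by_cases hij : i = 0 ∧ j0.succ = (0 : Fin (s2::w).length)
        · exact absurd hij.2 (Fin.succ_ne_zero j0)
        · rw [phi_ne (s2 := s2) g2 f hij] at hAG
          exact c6 i j0.succ i' hAG ((isTile_ss hs2 hs1).mp ht) ((colAbove_ss hs2 hs1).mp ha)
  · intro i j j' hBD hlt ht
    by_cases hij : i = 0 ∧ j = 0
    · rw [hij.1, hij.2, phi_zero_zero] at hBD
      rcases hg2 with rfl | rfl <;> rcases hBD with h | h <;> simp at h
    · rw [phi_ne (s2 := s2) g2 f hij] at hBD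
      have hj' : ¬ (i = 0 ∧ j' = 0) := by
        rintro ⟨rfl, rfl⟩
        exact absurd hlt (Fin.not_lt_zero _)
      rw [phi_ne (s2 := s2) g2 f hj']
      exact c7 i j j' hBD hlt ((isTile_ss hs2 hs1).mp ht)

lemma wt_phi (pa pb pg pd pt : R) (hs1 : s1 ≠ 0) (hs2 : s2 ≠ 0) {g1 g2 : Greek}
    (hg1 : g1 = Greek.A ∨ g1 = Greek.G) (hg2 : g2 = Greek.A ∨ g2 = Greek.G)
    (f : Filling (s1::w)) (h00 : f 0 0 = some g1) :
    gwt pa pb pg pd g2 * wt pa pb pg pd pt (s1::w) f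
      = gwt pa pb pg pd g1 * wt pa pb pg pd pt (s2::w) (phi s1 s2 w g2 f) := by
  rw [wt_split pa pb pg pd pt f, wt_split pa pb pg pd pt (phi s1 s2 w g2 f)]
  rw [tileWt_zero_zero pa pb pg pd pt hs1 f g1 h00,
    tileWt_zero_zero pa pb pg pd pt hs2 (phi s1 s2 w g2 f) g2 (phi_zero_zero g2 f)]
  have h1 : (∏ j : Fin w.length, tileWt pa pb pg pd pt (s1::w) f 0 j.succ)
      = ∏ j : Fin w.length, tileWt pa pb pg pd pt (s2::w) (phi s1 s2 w g2 f) 0 j.succ :=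
    Finset.prod_congr rfl fun j _ => tileWt_phi pa pb pg pd pt hs1 hs2 hg1 hg2 f h00 0 j.succ
      (fun hh => Fin.succ_ne_zero j hh.2)
  have h2 : (∏ i : Fin w.length, ∏ j : Fin (s1::w).length, tileWt pa pb pg pd pt (s1::w) f i.succ j)
      = ∏ i : Fin w.length, ∏ j : Fin (s2::w).length,
          tileWt pa pb pg pd pt (s2::w) (phi s1 s2 w g2 f) i.succ j :=
    Finset.prod_congr rfl fun i _ => Finset.prod_congr rfl fun j _ =>
      tileWt_phi pa pb pg pd pt hs1 hs2 hg1 hg2 f h00 i.succ j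
        (fun hh => Fin.succ_ne_zero i hh.1)
  rw [h1, h2]
  ring

/-! ### summation lemmas -/

open Classical

lemma wt_D (pa pb pg pd pt : R) (hs : s ≠ 0) (f : Filling (s::w)) (hf : IsRST (s::w) f)
    (h00 : f 0 0 = some Greek.D) :
    wt pa pb pg pd pt (s::w) f = pd * wt pa pb pg pd pt w (res s w f) := by
  have hrow := row0_none hs f hf (Or.inr h00)
  rw [wt_split pa pb pg pd pt f, tileWt_zero_zero pa pb pg pd pt hs f Greek.D h00,
    Finset.prod_congr rfl (fun j _ => tileWt_zero_succ_D pa pb pg pd pt hs f h00 hrow j),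
    Finset.prod_const_one, one_mul, prod_succ_res pa pb pg pd pt f hrow]
  rfl

lemma wt_B (pa pb pg pd pt : R) (hs : s ≠ 0) (f : Filling (s::w)) (hf : IsRST (s::w) f)
    (h00 : f 0 0 = some Greek.B) :
    wt pa pb pg pd pt (s::w) f
      = (pb * pt ^ (w.length + nzeros w)) * wt pa pb pg pd pt w (res s w f) := by
  have hrow := row0_none hs f hf (Or.inl h00)
  rw [wt_split pa pb pg pd pt f, tileWt_zero_zero pa pb pg pd pt hs f Greek.B h00,
    Finset.prod_congr rfl (fun j _ => tileWt_zero_succ_B pa pb pg pd pt hs f h00 hrow j),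
    prod_row_wt, prod_succ_res pa pb pg pd pt f hrow]
  show pb * _ = _
  ring

lemma sum_corner (pa pb pg pd pt : R) (hs : s ≠ 0) (o : Option Greek)
    (hBD : o = some Greek.B ∨ o = some Greek.D)
    (hb1 : s = -1 → o = some Greek.B ∨ o = some Greek.G)
    (hb2 : s = 1 → o = some Greek.A ∨ o = some Greek.D) (c0 : R)
    (hwt : ∀ f : Filling (s::w), IsRST (s::w) f → f 0 0 = o →
      wt pa pb pg pd pt (s::w) f = c0 * wt pa pb pg pd pt w (res s w f)) :
    (∑ f ∈ Finset.univ.filter (fun f : Filling (s::w) => IsRST (s::w) f ∧ f 0 0 = o),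
      wt pa pb pg pd pt (s::w) f) = c0 * RR pa pb pg pd pt w := by
  rw [RR, Finset.mul_sum]
  refine Finset.sum_bij' (fun f _ => res s w f) (fun g _ => ext s w o g) ?_ ?_ ?_ ?_ ?_
  · intro f hf
    rw [Finset.mem_filter] at hf ⊢
    exact ⟨Finset.mem_univ _, isRST_res f hf.2.1⟩
  · intro g hg
    rw [Finset.mem_filter] at hg ⊢
    exact ⟨Finset.mem_univ _, isRST_ext hs o hBD hb1 hb2 g hg.2, ext_zero_zero o g⟩
  · intro f hf
    rw [Finset.mem_filter] at hf
    exact (eq_ext hs f hf.2.1 o hf.2.2 hBD).symm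
  · intro g _
    exact res_ext o g
  · intro f hf
    rw [Finset.mem_filter] at hf
    exact hwt f hf.2.1 hf.2.2

lemma RR_split (pa pb pg pd pt : R) (hs : s ≠ 0) (gX gY : Greek) (hne : gX ≠ gY)
    (hborder : ∀ f : Filling (s::w), IsRST (s::w) f →
      f 0 0 = some gX ∨ f 0 0 = some gY) :
    RR pa pb pg pd pt (s::w)
      = (∑ f ∈ Finset.univ.filter
            (fun f : Filling (s::w) => IsRST (s::w) f ∧ f 0 0 = some gX),
          wt pa pb pg pd pt (s::w) f)
        + ∑ f ∈ Finset.univ.filter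
            (fun f : Filling (s::w) => IsRST (s::w) f ∧ f 0 0 = some gY),
          wt pa pb pg pd pt (s::w) f := by
  rw [RR]
  rw [← Finset.sum_filter_add_sum_filter_not
    (Finset.univ.filter (IsRST (s::w))) (fun f => f 0 0 = some gX)]
  rw [Finset.filter_filter, Finset.filter_filter]
  congr 1
  · refine Finset.sum_congr (Finset.filter_congr fun f _ => ?_) (fun _ _ => rfl)
    constructor
    · rintro ⟨h1, h2⟩
      rcases hborder f h1 with h | h
      · exact absurd h h2
      · exact ⟨h1, h⟩
    · rintro ⟨h1, h2⟩
      refine ⟨h1, fun hX => hne ?_⟩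
      rw [hX] at h2
      exact (Option.some_inj.mp h2).symm ▸ rfl

lemma sum_AG_eq (pa pb pg pd pt : R) :
    (∑ f ∈ Finset.univ.filter
        (fun f : Filling ((1:ℤ)::w) => IsRST ((1:ℤ)::w) f ∧ f 0 0 = some Greek.A),
      pg * wt pa pb pg pd pt ((1:ℤ)::w) f)
    = ∑ f ∈ Finset.univ.filter
        (fun f : Filling ((-1:ℤ)::w) => IsRST ((-1:ℤ)::w) f ∧ f 0 0 = some Greek.G),
      pa * wt pa pb pg pd pt ((-1:ℤ)::w) f := by
  have hs1 : (1:ℤ) ≠ 0 := one_ne_zero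
  have hs2 : (-1:ℤ) ≠ 0 := by norm_num
  refine Finset.sum_bij' (fun f _ => phi 1 (-1) w Greek.G f)
    (fun f _ => phi (-1) 1 w Greek.A f) ?_ ?_ ?_ ?_ ?_
  · intro f hf
    rw [Finset.mem_filter] at hf ⊢
    exact ⟨Finset.mem_univ _,
      isRST_phi hs1 hs2 (Or.inl rfl) (Or.inr rfl) (fun _ => Or.inr rfl)
        (fun h => absurd h (by norm_num)) f hf.2.1 hf.2.2,
      phi_zero_zero Greek.G f⟩
  · intro f hf
    rw [Finset.mem_filter] at hf ⊢
    exact ⟨Finset.mem_univ _,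
      isRST_phi hs2 hs1 (Or.inr rfl) (Or.inl rfl) (fun h => absurd h (by norm_num))
        (fun _ => Or.inl rfl) f hf.2.1 hf.2.2,
      phi_zero_zero Greek.A f⟩
  · intro f hf
    rw [Finset.mem_filter] at hf
    funext i j
    show phi (-1) 1 w Greek.A (phi 1 (-1) w Greek.G f) i j = f i j
    by_cases hij : i = 0 ∧ j = 0
    · rw [hij.1, hij.2, phi_zero_zero]
      exact hf.2.2.symm
    · rw [phi_ne (s2 := 1) Greek.A _ hij, phi_ne (s2 := -1) Greek.G f hij]
  · intro f hf
    rw [Finset.mem_filter] at hf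
    funext i j
    show phi 1 (-1) w Greek.G (phi (-1) 1 w Greek.A f) i j = f i j
    by_cases hij : i = 0 ∧ j = 0
    · rw [hij.1, hij.2, phi_zero_zero]
      exact hf.2.2.symm
    · rw [phi_ne (s2 := -1) Greek.G _ hij, phi_ne (s2 := 1) Greek.A f hij]
  · intro f hf
    rw [Finset.mem_filter] at hf
    exact wt_phi pa pb pg pd pt hs1 hs2 (Or.inl rfl) (Or.inr rfl) f hf.2.2

theorem RR_cons_rec (pa pb pg pd pt : R) (w : List ℤ) :
    pg * RR pa pb pg pd pt ((1:ℤ)::w) - pa * RR pa pb pg pd pt ((-1:ℤ)::w)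
      = (pg * pd - pa * pb * pt ^ (w.length + nzeros w)) * RR pa pb pg pd pt w := by
  have hs1 : (1:ℤ) ≠ 0 := one_ne_zero
  have hs2 : (-1:ℤ) ≠ 0 := by norm_num
  have h1 := RR_split (w := w) pa pb pg pd pt hs1 Greek.A Greek.D (by simp)
    (fun f hf => hf.2.2.1 0 rfl)
  have h2 := RR_split (w := w) pa pb pg pd pt hs2 Greek.G Greek.B (by simp)
    (fun f hf => (hf.2.1 0 rfl).symm)
  have hD := sum_corner (w := w) pa pb pg pd pt hs1 (some Greek.D) (Or.inr rfl)
    (fun h => absurd h (by norm_num)) (fun _ => Or.inr rfl) pd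
    (fun f hf h00 => wt_D pa pb pg pd pt hs1 f hf h00)
  have hB := sum_corner (w := w) pa pb pg pd pt hs2 (some Greek.B) (Or.inl rfl)
    (fun _ => Or.inl rfl) (fun h => absurd h (by norm_num))
    (pb * pt ^ (w.length + nzeros w))
    (fun f hf h00 => wt_B pa pb pg pd pt hs2 f hf h00)
  have hAG := sum_AG_eq (w := w) pa pb pg pd pt
  rw [h1, h2, hD, hB, mul_add, mul_add, Finset.mul_sum, Finset.mul_sum, hAG]
  ring

/-! ### the scalar recursion over `K6` -/

lemma map_ne_K6 (p : MvPolynomial (Fin 6) ℚ) (v : Fin 6 → ℚ)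
    (h : MvPolynomial.eval v p ≠ 0) : algebraMap (MvPolynomial (Fin 6) ℚ) K6 p ≠ 0 := by
  intro h0
  rw [IsFractionRing.to_map_eq_zero_iff] at h0
  rw [h0] at h
  simp at h

lemma hA1 : pA - 1 ≠ 0 := by
  have h : pA - 1 = algebraMap (MvPolynomial (Fin 6) ℚ) K6 (MvPolynomial.X 0 - 1) := by
    rw [map_sub, map_one]; rfl
  rw [h]
  exact map_ne_K6 _ (fun _ => 2) (by norm_num)

lemma hC1 : pC - 1 ≠ 0 := by
  have h : pC - 1 = algebraMap (MvPolynomial (Fin 6) ℚ) K6 (MvPolynomial.X 2 - 1) := by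
    rw [map_sub, map_one]; rfl
  rw [h]
  exact map_ne_K6 _ (fun _ => 2) (by norm_num)

lemma hB1 : pB - 1 ≠ 0 := by
  have h : pB - 1 = algebraMap (MvPolynomial (Fin 6) ℚ) K6 (MvPolynomial.X 1 - 1) := by
    rw [map_sub, map_one]; rfl
  rw [h]
  exact map_ne_K6 _ (fun _ => 2) (by norm_num)

lemma hD1 : pD - 1 ≠ 0 := by
  have h : pD - 1 = algebraMap (MvPolynomial (Fin 6) ℚ) K6 (MvPolynomial.X 3 - 1) := by
    rw [map_sub, map_one]; rfl
  rw [h]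
  exact map_ne_K6 _ (fun _ => 2) (by norm_num)

lemma hT1 : 1 - pT ≠ 0 := by
  have h : 1 - pT = algebraMap (MvPolynomial (Fin 6) ℚ) K6 (1 - MvPolynomial.X 5) := by
    rw [map_sub, map_one]; rfl
  rw [h]
  exact map_ne_K6 _ (fun _ => 2) (by norm_num)

lemma hQ0 : pQ ≠ 0 :=
  map_ne_K6 _ (fun _ => 2) (by norm_num)

lemma hchG : chG ≠ 0 := div_ne_zero hT1 (mul_ne_zero hA1 hC1)

lemma hchD : chD ≠ 0 := div_ne_zero hT1 (mul_ne_zero hB1 hD1)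

lemma habcd (i : ℕ) : pA * pB * pC * pD * pT ^ i - 1 ≠ 0 := by
  have h : pA * pB * pC * pD * pT ^ i - 1
      = algebraMap (MvPolynomial (Fin 6) ℚ) K6
        (MvPolynomial.X 0 * MvPolynomial.X 1 * MvPolynomial.X 2 * MvPolynomial.X 3
          * MvPolynomial.X 5 ^ i - 1) := by
    simp only [map_sub, map_one, map_mul, map_pow]; rfl
  rw [h]
  refine map_ne_K6 _ (fun k => if k = 5 then 1 else 2) ?_
  simp
  norm_num

lemma hlam (i : ℕ) : chA * chB * pT ^ i - chG * chD ≠ 0 := by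
  have h : chA * chB * pT ^ i - chG * chD
      = chG * chD * (pA * pB * pC * pD * pT ^ i - 1) := by
    unfold chA chB chG chD
    ring
  rw [h]
  exact mul_ne_zero (mul_ne_zero hchG hchD) (habcd i)

lemma hchA_eq : chA = -(pA * pC) * chG := by
  unfold chA chG; ring

lemma hchG1 : (pA - 1) * (pC - 1) * chG = 1 - pT := by
  unfold chG
  rw [mul_comm, div_mul_cancel₀ _ (mul_ne_zero hA1 hC1)]

lemma nzeros_cons_ne (s : ℤ) (hs : s ≠ 0) (u : List ℤ) : nzeros (s::u) = nzeros u := by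
  simp [nzeros, List.count_cons, hs, Ne.symm hs]

lemma nzeros_le (u : List ℤ) : nzeros u ≤ u.length := List.count_le_length

theorem key_rec (u : List ℤ) :
    Rt chA chB chG chD pT ((1:ℤ)::u)
      = (pA - 1) * (pC - 1) * Rt chA chB chG chD pT u
        - pA * pC * Rt chA chB chG chD pT ((-1:ℤ)::u) := by
  have hr := nzeros_le u
  have hstar := RR_cons_rec chA chB chG chD pT u
  set n := u.length with hn
  set r := nzeros u with hrdef
  set m := n + r with hm
  set P := ∏ i ∈ Finset.Ico (2*r) (n + r), (chA * chB * pT ^ i - chG * chD) with hP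
  set lam := chA * chB * pT ^ m - chG * chD with hlamdef
  have hPne : P ≠ 0 := by
    rw [hP]
    exact Finset.prod_ne_zero_iff.mpr (fun i _ => hlam i)
  have hlamne : lam ≠ 0 := hlam m
  -- the three `Rt`s in usable form
  have hico : ∀ s : ℤ, s ≠ 0 → (Finset.Ico (2 * nzeros (s::u)) ((s::u).length + nzeros (s::u)))
      = Finset.Ico (2*r) (m + 1) := by
    intro s hs
    rw [nzeros_cons_ne s hs]
    congr 1
    simp [hm, hn]
    omega
  have hprod : ∀ s : ℤ, s ≠ 0 →
      (∏ i ∈ Finset.Ico (2 * nzeros (s::u)) ((s::u).length + nzeros (s::u)),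
        (chA * chB * pT ^ i - chG * chD)) = P * lam := by
    intro s hs
    rw [hico s hs, Finset.prod_Ico_succ_top (by omega), hP, hlamdef]
  have hexp : ∀ s : ℤ, s ≠ 0 → ((s::u).length - nzeros (s::u)) = (n - r) + 1 := by
    intro s hs
    rw [nzeros_cons_ne s hs]
    simp [hn]
    omega
  have e1 : Rt chA chB chG chD pT ((1:ℤ)::u)
      = (pT - 1)^(n - r) * (pT - 1) / (P * lam) * RR chA chB chG chD pT ((1:ℤ)::u) := by
    rw [Rt, hprod 1 one_ne_zero, hexp 1 one_ne_zero, pow_succ]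
  have em1 : Rt chA chB chG chD pT ((-1:ℤ)::u)
      = (pT - 1)^(n - r) * (pT - 1) / (P * lam) * RR chA chB chG chD pT ((-1:ℤ)::u) := by
    rw [Rt, hprod (-1) (by norm_num), hexp (-1) (by norm_num), pow_succ]
  have e0 : Rt chA chB chG chD pT u
      = (pT - 1)^(n - r) / P * RR chA chB chG chD pT u := by
    rw [Rt]
  have hRR : RR chA chB chG chD pT ((1:ℤ)::u) + pA * pC * RR chA chB chG chD pT ((-1:ℤ)::u)
      = (chD + pA * pC * chB * pT ^ m) * RR chA chB chG chD pT u := by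
    apply mul_left_cancel₀ hchG
    linear_combination hstar + (RR chA chB chG chD pT ((-1:ℤ)::u)
      - chB * pT^m * RR chA chB chG chD pT u) * hchA_eq
  have hlam_eq : lam = -chG * (chD + pA * pC * chB * pT ^ m) := by
    rw [hlamdef, hchA_eq]
    ring
  rw [e1, em1, e0]
  have hQ : (pT - 1)^(n - r) / P = (pT - 1)^(n - r) / (P * lam) * lam := by
    rw [div_mul_eq_mul_div, mul_div_mul_right _ _ hlamne]
  have hQ2 : (pT - 1)^(n - r) * (pT - 1) / (P * lam) = (pT - 1)^(n - r) / (P * lam) * (pT - 1) := by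
    ring
  rw [hQ, hQ2]
  linear_combination ((pT - 1)^(n - r) / (P * lam) * (pT-1)) * hRR
    + (-((pT - 1)^(n - r) / (P * lam) * (pA-1) * (pC-1) * RR chA chB chG chD pT u)) * hlam_eq
    + ((pT - 1)^(n - r) / (P * lam) * RR chA chB chG chD pT u
        * (chD + pA * pC * chB * pT ^ m)) * hchG1

/-! ### the operator `T0` on Laurent polynomials -/

section Op

variable {K : Type*} [Field K] {N : ℕ}

lemma CC_mul_CC (x y : K) : (CC x : Lp K N) * CC y = CC (x * y) := by
  simp [CC, AddMonoidAlgebra.single_mul_single]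

lemma CC_neg (x : K) : (CC (-x) : Lp K N) = -CC x := by
  simp [CC]

lemma CC_one : (CC 1 : Lp K N) = 1 := by
  simp [CC, AddMonoidAlgebra.one_def]

lemma CC_zero : (CC 0 : Lp K N) = 0 := by
  simp [CC]

lemma CC_mul_single (r : K) (m : Fin N → ℤ) (c : K) :
    (CC r : Lp K N) * AddMonoidAlgebra.single m c = AddMonoidAlgebra.single m (r * c) := by
  simp [CC, AddMonoidAlgebra.single_mul_single]

lemma CC_mul_eq_sum (r : K) (g : Lp K N) :
    CC r * g = Finsupp.sum g.coeff (fun m c => AddMonoidAlgebra.single m (r * c)) := by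
  rw [CC, AddMonoidAlgebra.mul_def, AddMonoidAlgebra.coeff_single, Finsupp.sum_single_index]
  · simp
  · simp

lemma dd0_add (q : K) (v : Fin N) (f g : Lp K N) :
    dd0 q v (f + g) = dd0 q v f + dd0 q v g := by
  unfold dd0
  rw [AddMonoidAlgebra.coeff_add]
  apply Finsupp.sum_add_index'
  · intro m; rw [CC_zero, zero_mul]
  · intro m b₁ b₂
    have : (CC (b₁ + b₂) : Lp K N) = CC b₁ + CC b₂ := by simp [CC]
    rw [this, add_mul]

noncomputable def dd0AM (q : K) (v : Fin N) : Lp K N →+ Lp K N :=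
  AddMonoidHom.mk' (dd0 q v) (dd0_add q v)

lemma dd0_single (q : K) (v : Fin N) (m : Fin N → ℤ) (c : K) :
    dd0 q v (AddMonoidAlgebra.single m c) = CC c * dd0Mono q v m := by
  unfold dd0
  rw [AddMonoidAlgebra.coeff_single, Finsupp.sum_single_index (by simp [CC])]

lemma dd0Mono_of_zero (q : K) (v : Fin N) (m : Fin N → ℤ) (h : m v = 0) :
    dd0Mono q v m = (0 : Lp K N) := by
  simp [dd0Mono, h]

lemma dd0Mono_of_negone (q : K) (v : Fin N) (m : Fin N → ℤ) (h : m v = -1) :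
    dd0Mono q v m = - AddMonoidAlgebra.single (Function.update m v 0) (q⁻¹ : K) := by
  rw [dd0Mono, if_neg (by omega)]
  rw [show (-(m v)).toNat = 1 by omega]
  rw [Finset.range_one, Finset.sum_singleton]
  norm_num [h]

lemma dd0_indep (q : K) (v : Fin N) (g : Lp K N) (hg : IndepVar g v) :
    dd0 q v g = 0 := by
  unfold dd0
  rw [Finsupp.sum]
  refine Finset.sum_eq_zero fun m hm => ?_
  rw [dd0Mono_of_zero q v m (hg m (Finsupp.mem_support_iff.mp hm)), mul_zero]

lemma zinv_mul_eq_sum (v : Fin N) (g : Lp K N) :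
    (Zinv v : Lp K N) * g
      = Finsupp.sum g.coeff (fun m c => AddMonoidAlgebra.single (Pi.single v (-1) + m) c) := by
  rw [Zinv, AddMonoidAlgebra.mul_def, AddMonoidAlgebra.coeff_single, Finsupp.sum_single_index (by simp)]
  simp

lemma dd0_zinv (q : K) (v : Fin N) (g : Lp K N) (hg : IndepVar g v) :
    dd0 q v ((Zinv v : Lp K N) * g) = CC (-(q⁻¹)) * g := by
  rw [zinv_mul_eq_sum]
  refine Eq.trans (map_finsuppSum (dd0AM q v) g.coeff _) ?_
  rw [CC_mul_eq_sum]
  refine Finsupp.sum_congr fun m hm => ?_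
  have hmv : m v = 0 := hg m (Finsupp.mem_support_iff.mp hm)
  have h1 : ((Pi.single v (-1) : Fin N → ℤ) + m) v = -1 := by
    simp [hmv]
  show dd0 q v (AddMonoidAlgebra.single (Pi.single v (-1) + m) (g.coeff m)) = _
  rw [dd0_single, dd0Mono_of_negone q v _ h1]
  have h2 : Function.update ((Pi.single v (-1) : Fin N → ℤ) + m) v 0 = m := by
    funext x
    by_cases hx : x = v
    · subst hx; simp [hmv]
    · simp [Function.update, hx, Pi.single_apply, hx]
  rw [h2, mul_neg, CC_mul_single]
  have h3 : -(q⁻¹) * g.coeff m = -(g.coeff m * q⁻¹) := by ring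
  rw [h3, AddMonoidAlgebra.single_neg]

lemma T0_add (a c q : K) (v : Fin N) (f g : Lp K N) :
    T0 a c q v (f + g) = T0 a c q v f + T0 a c q v g := by
  unfold T0
  rw [dd0_add]
  ring

noncomputable def T0AM (a c q : K) (v : Fin N) : Lp K N →+ Lp K N :=
  AddMonoidHom.mk' (T0 a c q v) (T0_add a c q v)

lemma qT0_indep (a c q : K) (hq : q ≠ 0) (v : Fin N) (g : Lp K N) (hg : IndepVar g v) :
    CC q * T0 a c q v g = CC (-(a*c)) * g := by
  rw [T0, dd0_indep q v g hg, mul_zero, add_zero, ← mul_assoc, CC_mul_CC]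
  congr 2
  field_simp

lemma qT0_zinv (a c q : K) (hq : q ≠ 0) (v : Fin N) (g : Lp K N) (hg : IndepVar g v) :
    CC q * T0 a c q v ((Zinv v : Lp K N) * g) = (Z v - CC (a+c)) * g := by
  rw [T0, dd0_zinv q v g hg]
  have h1 : (CC q : Lp K N) * CC (-(a*c)/q) = CC (-(a*c)) := by
    rw [CC_mul_CC]; congr 1; field_simp
  have h2 : (CC q : Lp K N) * CC (-(q⁻¹)) = -1 := by
    rw [CC_mul_CC]
    have : q * -(q⁻¹) = -1 := by field_simp
    rw [this, CC_neg, CC_one]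
  have h3 : (CC (-(a*c)) : Lp K N) = -CC (a*c) := CC_neg _
  linear_combination (Zinv v * g) * h1 + ((CC (a+c) - Z v - CC (a*c) * Zinv v) * g) * h2
    + (Zinv v * g) * h3

lemma indep_single (v : Fin N) (m : Fin N → ℤ) (h : m v = 0) (c : K) :
    IndepVar (AddMonoidAlgebra.single m c : Lp K N) v := by
  intro m' hm'
  have : ¬ m' ≠ m := fun hne => hm' (by simp [coeff, AddMonoidAlgebra.coeff_single_apply, Ne.symm hne])
  rw [not_not.mp this]
  exact h

lemma indep_CC (v : Fin N) (r : K) : IndepVar (CC r : Lp K N) v :=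
  indep_single v 0 rfl r

lemma indep_one (v : Fin N) : IndepVar (1 : Lp K N) v := by
  rw [AddMonoidAlgebra.one_def]
  exact indep_single v 0 rfl 1

lemma indep_sub (v : Fin N) (f g : Lp K N) (hf : IndepVar f v) (hg : IndepVar g v) :
    IndepVar (f - g) v := by
  intro m hm
  by_cases h1 : coeff f m ≠ 0
  · exact hf m h1
  · refine hg m ?_
    rw [not_not] at h1
    intro h2
    apply hm
    show (f - g).coeff m = 0
    have e1 : f.coeff m = 0 := h1
    have e2 : g.coeff m = 0 := h2
    rw [AddMonoidAlgebra.coeff_sub, Finsupp.sub_apply, e1, e2, sub_zero]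

lemma indep_mul (v : Fin N) (f g : Lp K N) (hf : IndepVar f v) (hg : IndepVar g v) :
    IndepVar (f * g) v := by
  intro m hm
  have hmem : m ∈ (f * g).coeff.support := Finsupp.mem_support_iff.mpr hm
  have := AddMonoidAlgebra.support_coeff_mul_subset f g hmem
  rw [Finset.mem_add] at this
  obtain ⟨m1, hm1, m2, hm2, rfl⟩ := this
  have e1 : m1 v = 0 := hf m1 (Finsupp.mem_support_iff.mp hm1)
  have e2 : m2 v = 0 := hg m2 (Finsupp.mem_support_iff.mp hm2)
  show m1 v + m2 v = 0
  omega

end Op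

/-! ### assembling the main theorem -/

section Main

lemma CC_add {K : Type*} [Field K] {N : ℕ} (x y : K) :
    (CC (x + y) : Lp K N) = CC x + CC y := by simp [CC]

lemma CC_sub {K : Type*} [Field K] {N : ℕ} (x y : K) :
    (CC (x - y) : Lp K N) = CC x - CC y := by simp [CC, Finsupp.single_sub]

lemma CC_mul' {K : Type*} [Field K] {N : ℕ} (x y : K) :
    (CC (x * y) : Lp K N) = CC x * CC y := (CC_mul_CC x y).symm

lemma wordOf_split (N : ℕ) (hN : 0 < N) (mu : Fin N → ℤ) (S : Finset (Fin N))
    (h : (⟨0, hN⟩ : Fin N) ∉ S) :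
    wordOf N mu S = mu ⟨0, hN⟩ :: wordOf N mu (insert ⟨0, hN⟩ S) := by
  obtain ⟨M, rfl⟩ : ∃ M, N = M + 1 := ⟨N - 1, by omega⟩
  have h0 : (⟨0, hN⟩ : Fin (M + 1)) = 0 := rfl
  rw [h0] at h ⊢
  unfold wordOf
  rw [List.finRange_succ]
  rw [List.filter_cons, List.filter_cons]
  rw [if_pos (by simpa using h), if_neg (by simp)]
  rw [List.map_cons]
  congr 1
  congr 1
  apply List.filter_congr
  intro a ha
  rw [List.mem_map] at ha
  obtain ⟨b, -, rfl⟩ := ha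
  simp [Finset.mem_insert, Fin.succ_ne_zero]

lemma wordOf_congr (N : ℕ) (mu nu : Fin N → ℤ) (S : Finset (Fin N))
    (h : ∀ k : Fin N, k ∉ S → mu k = nu k) :
    wordOf N mu S = wordOf N nu S := by
  unfold wordOf
  apply List.map_congr_left
  intro k hk
  rw [List.mem_filter] at hk
  exact h k (by simpa using hk.2)

theorem statement12' (N : ℕ) (hN : 0 < N) (x : List ℤ) :
    CC pQ * T0 pA pC pQ ⟨0, hN⟩
        (FF chA chB chG chD pT N (funOf N ((-1 : ℤ) :: x))) =
      FF chA chB chG chD pT N (funOf N ((1 : ℤ) :: x)) := by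
  set v0 : Fin N := ⟨0, hN⟩ with hv0
  set μp : Fin N → ℤ := funOf N ((1 : ℤ) :: x) with hμp
  set μm : Fin N → ℤ := funOf N ((-1 : ℤ) :: x) with hμm
  have hμpv0 : μp v0 = 1 := rfl
  have hμmv0 : μm v0 = -1 := rfl
  have hagree : ∀ k : Fin N, k ≠ v0 → μp k = μm k := by
    intro k hk
    obtain ⟨j, hj⟩ : ∃ j, (k : ℕ) = j + 1 :=
      ⟨(k : ℕ) - 1, by
        have : (k : ℕ) ≠ 0 := fun h0 => hk (Fin.ext h0)
        omega⟩
    show ((1 : ℤ) :: x).getD (k : ℕ) 0 = ((-1 : ℤ) :: x).getD (k : ℕ) 0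
    rw [hj, List.getD_cons_succ, List.getD_cons_succ]
  set V' : Finset (Fin N) := (Finset.univ.filter fun k => μp k ≠ 0).erase v0 with hV'
  have hv0V : v0 ∈ Finset.univ.filter fun k => μp k ≠ 0 := by
    simp [hμpv0]
  have hnotin : v0 ∉ V' := Finset.notMem_erase _ _
  have hVp : (Finset.univ.filter fun k => μp k ≠ 0) = insert v0 V' :=
    (Finset.insert_erase hv0V).symm
  have hVm : (Finset.univ.filter fun k => μm k ≠ 0) = insert v0 V' := by
    rw [← hVp]
    apply Finset.filter_congr
    intro k _
    by_cases hk : k = v0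
    · subst hk
      simp [hμpv0, hμmv0]
    · rw [hagree k hk]
  rw [FF, FF, hVp, hVm, Finset.sum_powerset_insert hnotin, Finset.sum_powerset_insert hnotin]
  rw [T0_add, mul_add]
  rw [show T0 pA pC pQ v0 (∑ S ∈ V'.powerset,
        CC (Rt chA chB chG chD pT (wordOf N μm S)) *
          ∏ i ∈ S, (AddMonoidAlgebra.single (Pi.single i (μm i)) (1:K6) - 1))
      = ∑ S ∈ V'.powerset, T0 pA pC pQ v0
        (CC (Rt chA chB chG chD pT (wordOf N μm S)) *
          ∏ i ∈ S, (AddMonoidAlgebra.single (Pi.single i (μm i)) (1:K6) - 1))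
    from map_sum (T0AM pA pC pQ v0) _ _]
  rw [show T0 pA pC pQ v0 (∑ S ∈ V'.powerset,
        CC (Rt chA chB chG chD pT (wordOf N μm (insert v0 S))) *
          ∏ i ∈ insert v0 S, (AddMonoidAlgebra.single (Pi.single i (μm i)) (1:K6) - 1))
      = ∑ S ∈ V'.powerset, T0 pA pC pQ v0
        (CC (Rt chA chB chG chD pT (wordOf N μm (insert v0 S))) *
          ∏ i ∈ insert v0 S, (AddMonoidAlgebra.single (Pi.single i (μm i)) (1:K6) - 1))
    from map_sum (T0AM pA pC pQ v0) _ _]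
  rw [Finset.mul_sum, Finset.mul_sum, ← Finset.sum_add_distrib, ← Finset.sum_add_distrib]
  apply Finset.sum_congr rfl
  intro S hS
  have hSsub : S ⊆ V' := Finset.mem_powerset.mp hS
  have hv0S : v0 ∉ S := fun h => hnotin (hSsub h)
  have hSne : ∀ i ∈ S, i ≠ v0 := fun i hi hEq => hv0S (hEq ▸ hi)
  -- words
  have hwmins : wordOf N μm (insert v0 S) = wordOf N μp (insert v0 S) := by
    apply wordOf_congr
    intro k hk
    have : k ≠ v0 := fun hEq => hk (hEq ▸ Finset.mem_insert_self v0 S)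
    exact (hagree k this).symm
  have hwp : wordOf N μp S = (1 : ℤ) :: wordOf N μp (insert v0 S) := by
    rw [wordOf_split N hN μp S hv0S]
    rfl
  have hwm : wordOf N μm S = (-1 : ℤ) :: wordOf N μp (insert v0 S) := by
    rw [wordOf_split N hN μm S hv0S, hwmins]
    rfl
  -- products
  set P : Lp K6 N := ∏ i ∈ S, (AddMonoidAlgebra.single (Pi.single i (μp i)) (1:K6) - 1)
    with hPdef
  have hPm : (∏ i ∈ S, (AddMonoidAlgebra.single (Pi.single i (μm i)) (1:K6) - 1)) = P := by
    rw [hPdef]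
    exact Finset.prod_congr rfl fun i hi => by rw [hagree i (hSne i hi)]
  have hPindep : IndepVar P v0 := by
    rw [hPdef]
    refine Finset.prod_induction _ (fun f => IndepVar f v0)
      (fun f g hf hg => indep_mul v0 f g hf hg) (indep_one v0) ?_
    intro i hi
    refine indep_sub v0 _ _ (indep_single v0 _ ?_ 1) (indep_one v0)
    exact Pi.single_eq_of_ne (Ne.symm (hSne i hi)) _
  have hPinsm : (∏ i ∈ insert v0 S, (AddMonoidAlgebra.single (Pi.single i (μm i)) (1:K6) - 1))
      = (Zinv v0 - 1) * P := by
    rw [Finset.prod_insert hv0S, hPm]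
    congr 1
  have hPinsp : (∏ i ∈ insert v0 S, (AddMonoidAlgebra.single (Pi.single i (μp i)) (1:K6) - 1))
      = (Z v0 - 1) * P := by
    rw [Finset.prod_insert hv0S]
    congr 1
  rw [hwp, hwm, hwmins, hPm, hPinsm, hPinsp]
  set ru : K6 := Rt chA chB chG chD pT (wordOf N μp (insert v0 S)) with hru
  set r1 : K6 := Rt chA chB chG chD pT ((1:ℤ) :: wordOf N μp (insert v0 S)) with hr1
  set rm : K6 := Rt chA chB chG chD pT ((-1:ℤ) :: wordOf N μp (insert v0 S)) with hrm
  -- evaluate the operator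
  have hg1 : IndepVar (CC rm * P) v0 := indep_mul v0 _ _ (indep_CC v0 rm) hPindep
  have hgu : IndepVar (CC ru * P) v0 := indep_mul v0 _ _ (indep_CC v0 ru) hPindep
  have e1 : CC pQ * T0 pA pC pQ v0 (CC rm * P) = CC (-(pA*pC)) * (CC rm * P) :=
    qT0_indep pA pC pQ hQ0 v0 _ hg1
  have esplit : CC ru * ((Zinv v0 - 1) * P)
      = Zinv v0 * (CC ru * P) - CC ru * P := by ring
  have e2 : CC pQ * T0 pA pC pQ v0 (CC ru * ((Zinv v0 - 1) * P))
      = (Z v0 - CC (pA + pC)) * (CC ru * P) - CC (-(pA*pC)) * (CC ru * P) := by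
    rw [esplit]
    have hsub : T0 pA pC pQ v0 (Zinv v0 * (CC ru * P) - CC ru * P)
        = T0 pA pC pQ v0 (Zinv v0 * (CC ru * P)) - T0 pA pC pQ v0 (CC ru * P) :=
      map_sub (T0AM pA pC pQ v0) _ _
    rw [hsub, mul_sub, qT0_zinv pA pC pQ hQ0 v0 _ hgu, qT0_indep pA pC pQ hQ0 v0 _ hgu]
  rw [e1, e2]
  have hkey : r1 = (pA - 1) * (pC - 1) * ru - pA * pC * rm := key_rec _
  rw [hkey]
  simp only [CC_sub, CC_mul', CC_add, CC_neg, CC_one]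
  ring

end Main



/-- For a word `x` in `{-1,0,1}` of length `N-1`, over
`K = ℚ(a,b,c,d,q,t)` with the change of variables `α = -ac(1-t)/((a-1)(c-1))`,
`γ = (1-t)/((a-1)(c-1))`, `β = -bd(1-t)/((b-1)(d-1))`, `δ = (1-t)/((b-1)(d-1))`, the Noumi
operator `T̃₀` satisfies `q T̃₀(F_{∘x}) = F_{●x}`. -/
theorem statement12 (N : ℕ) (hN : 1 ≤ N) (x : List ℤ)
    (hx : ∀ s ∈ x, s = -1 ∨ s = 0 ∨ s = 1) (hxl : x.length = N - 1) :
    CC pQ * T0 pA pC pQ ⟨0, by omega⟩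
        (FF chA chB chG chD pT N (funOf N ((-1 : ℤ) :: x))) =
      FF chA chB chG chD pT N (funOf N ((1 : ℤ) :: x)) := by
  exact statement12' N (by omega) x

end RST
end
end

section
/- Let 1 ≤ i ≤ N−1, let a ∈ {∘, ∗, ●} = {−1, 0, 1}, and let x, y be words in {−1, 0, 1} with |x| = i−1 and |x| + |y| = N−2. Then T̃_i(F_{xaay}(z; t)) = t·F_{xaay}(z; t); in particular, when a ∈ {±1}, the Laurent polynomial F_{xaay}(z; t) is symmetric in the variables z_i and z_{i+1}. -/
open scoped BigOperators
open Finset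

noncomputable section

namespace RST

/-! ### Auxiliary lemmas for Statement 14 -/

section Aux

variable {K : Type*} [Field K] {N : ℕ}

lemma comp_swap_eq_self (m : Fin N → ℤ) (u v : Fin N) (h : m u = m v) :
    m ∘ Equiv.swap u v = m := by
  funext j
  rcases eq_or_ne j u with rfl | hju
  · simp [h]
  rcases eq_or_ne j v with rfl | hjv
  · simp [h]
  · simp [Equiv.swap_apply_of_ne_of_ne hju hjv]

lemma update_update_comp_swap (m : Fin N → ℤ) (u v : Fin N) (a b : ℤ) :
    Function.update (Function.update (m ∘ Equiv.swap u v) u a) v b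
      = Function.update (Function.update m u a) v b := by
  funext j
  rcases eq_or_ne j v with rfl | hv
  · simp
  rcases eq_or_ne j u with rfl | hu
  · simp [Function.update_of_ne hv]
  · simp [Function.update_of_ne hv, Function.update_of_ne hu,
      Equiv.swap_apply_of_ne_of_ne hu hv]

lemma ddMono_self (u v : Fin N) (m : Fin N → ℤ) (h : m u = m v) :
    ddMono (K := K) u v m = 0 := by
  unfold ddMono
  rw [if_pos h.ge]
  simp [h]

lemma ddMono_symm (u v : Fin N) (m : Fin N → ℤ) :
    ddMono (K := K) u v (m ∘ Equiv.swap u v) = - ddMono u v m := by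
  have hu : (m ∘ Equiv.swap u v) u = m v := by simp
  have hv : (m ∘ Equiv.swap u v) v = m u := by simp
  unfold ddMono
  rw [hu, hv]
  rcases lt_trichotomy (m u) (m v) with h | h | h
  · rw [if_pos h.le, if_neg (not_le.mpr h), neg_neg]
    exact Finset.sum_congr rfl fun k _ => by rw [update_update_comp_swap]
  · rw [if_pos h.ge, if_pos h.le]
    simp [h]
  · rw [if_neg (not_le.mpr h), if_pos h.le, neg_inj]
    exact Finset.sum_congr rfl fun k _ => by rw [update_update_comp_swap]

lemma swapVars_eq_mapDomain (u v : Fin N) (f : Lp K N) :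
    swapVars u v f = AddMonoidAlgebra.ofCoeff
        (Finsupp.mapDomain (· ∘ Equiv.swap u v) (AddMonoidAlgebra.coeff f)) := by
  rw [Finsupp.mapDomain, AddMonoidAlgebra.ofCoeff_finsuppSum]
  rfl

lemma comp_swap_injective (u v : Fin N) :
    Function.Injective (fun m : Fin N → ℤ => m ∘ Equiv.swap u v) := by
  intro a b hab
  funext j
  have := congrFun hab (Equiv.swap u v j)
  simpa using this

lemma apply_comp_swap (u v : Fin N) (f : Lp K N) (hf : swapVars u v f = f)
    (m : Fin N → ℤ) : AddMonoidAlgebra.coeff f (m ∘ Equiv.swap u v) = AddMonoidAlgebra.coeff f m := by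
  calc AddMonoidAlgebra.coeff f (m ∘ Equiv.swap u v)
      = Finsupp.mapDomain (· ∘ Equiv.swap u v) (AddMonoidAlgebra.coeff f) (m ∘ Equiv.swap u v) := by
        rw [← AddMonoidAlgebra.coeff_ofCoeff
          (Finsupp.mapDomain (· ∘ Equiv.swap u v) (AddMonoidAlgebra.coeff f)),
          ← swapVars_eq_mapDomain, hf]
    _ = AddMonoidAlgebra.coeff f m :=
        Finsupp.mapDomain_apply (comp_swap_injective u v) (AddMonoidAlgebra.coeff f) m

lemma ddPair_eq_zero (u v : Fin N) (f : Lp K N) (hf : swapVars u v f = f) :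
    ddPair u v f = 0 := by
  classical
  unfold ddPair
  rw [Finsupp.sum]
  refine Finset.sum_involution (fun m _ => m ∘ Equiv.swap u v) ?_ ?_ ?_ ?_
  · intro m _
    rw [apply_comp_swap u v f hf, ddMono_symm]
    ring
  · intro m _ h hc
    apply h
    have hm : m u = m v := by
      have := congrFun hc u
      simp at this
      omega
    rw [ddMono_self u v m hm, mul_zero]
  · intro m hm
    rw [Finsupp.mem_support_iff] at hm ⊢
    rwa [apply_comp_swap u v f hf]
  · intro m _
    funext j
    simp [Function.comp, Equiv.swap_apply_self]

lemma Tmid_of_swap_symm (t : K) (u v : Fin N) (f : Lp K N)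
    (hf : swapVars u v f = f) : Tmid t u v f = CC t * f := by
  unfold Tmid
  rw [ddPair_eq_zero u v f hf, mul_zero, sub_zero]

lemma filter_map_eq_filterMap {α β : Type*} (p : α → Bool) (f : α → β) (l : List α) :
    (l.filter p).map f = l.filterMap (fun a => if p a then some (f a) else none) := by
  induction l with
  | nil => rfl
  | cons a l ih =>
    cases h : p a <;> simp [List.filter_cons, List.filterMap_cons, h, ih]

lemma mem_take_finRange {k : ℕ} {a : Fin N} (ha : a ∈ (List.finRange N).take k) :
    (a : ℕ) < k := by
  obtain ⟨n, hn, hna⟩ := List.mem_iff_getElem.1 ha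
  have hlen : n < (List.finRange N).length := by
    simpa using (List.length_take (i := k) (l := List.finRange N) ▸ hn).trans_le (by simp [Nat.min_le_right])
  rw [List.getElem_take, List.getElem_finRange] at hna
  have : (a : ℕ) = n := by rw [← hna]; rfl
  have hnlt : n < k := by
    have := hn
    simp [List.length_take] at this
    omega
  omega

lemma mem_drop_finRange {k : ℕ} {a : Fin N} (ha : a ∈ (List.finRange N).drop k) :
    k ≤ (a : ℕ) := by
  obtain ⟨n, hn, hna⟩ := List.mem_iff_getElem.1 ha
  rw [List.getElem_drop, List.getElem_finRange] at hna
  have : (a : ℕ) = k + n := by rw [← hna]; rfl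
  omega

lemma finRange_decomp (u v : Fin N) (hadj : (u : ℕ) + 1 = (v : ℕ)) :
    List.finRange N
      = (List.finRange N).take (u : ℕ) ++ u :: v :: (List.finRange N).drop ((u : ℕ) + 2) := by
  conv_lhs => rw [← List.take_append_drop (u : ℕ) (List.finRange N)]
  congr 1
  have h1 : (u : ℕ) < (List.finRange N).length := by simp
  have h2 : (u : ℕ) + 1 < (List.finRange N).length := by
    simp only [List.length_finRange]
    omega
  rw [List.drop_eq_getElem_cons h1, List.drop_eq_getElem_cons h2]
  rw [List.getElem_finRange, List.getElem_finRange]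
  have e1 : (Fin.cast (by simp) ⟨(u : ℕ), h1⟩ : Fin N) = u := Fin.ext rfl
  have e2 : (Fin.cast (by simp) ⟨(u : ℕ) + 1, h2⟩ : Fin N) = v := Fin.ext hadj
  rw [e1, e2]

lemma map_swap_finRange (u v : Fin N) (hadj : (u : ℕ) + 1 = (v : ℕ)) :
    (List.finRange N).map (Equiv.swap u v)
      = (List.finRange N).take (u : ℕ) ++ v :: u :: (List.finRange N).drop ((u : ℕ) + 2) := by
  conv_lhs => rw [finRange_decomp u v hadj]
  rw [List.map_append, List.map_cons, List.map_cons]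
  have ht : ((List.finRange N).take (u : ℕ)).map (Equiv.swap u v)
      = (List.finRange N).take (u : ℕ) := by
    rw [show ((List.finRange N).take (u : ℕ)) =
        ((List.finRange N).take (u : ℕ)).map id by simp]
    rw [List.map_map]
    refine List.map_congr_left fun a ha => ?_
    have h1 := mem_take_finRange (by simpa using ha)
    have hau : a ≠ u := fun h => by omega
    have hav : a ≠ v := fun h => by
      have : (a : ℕ) = (v : ℕ) := by rw [h]
      omega
    simp [Equiv.swap_apply_of_ne_of_ne hau hav]
  have hd : ((List.finRange N).drop ((u : ℕ) + 2)).map (Equiv.swap u v)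
      = (List.finRange N).drop ((u : ℕ) + 2) := by
    rw [show ((List.finRange N).drop ((u : ℕ) + 2)) =
        ((List.finRange N).drop ((u : ℕ) + 2)).map id by simp]
    rw [List.map_map]
    refine List.map_congr_left fun a ha => ?_
    have h1 := mem_drop_finRange (by simpa using ha)
    have hau : a ≠ u := fun h => by
      have : (a : ℕ) = (u : ℕ) := by rw [h]
      omega
    have hav : a ≠ v := fun h => by
      have : (a : ℕ) = (v : ℕ) := by rw [h]
      omega
    simp [Equiv.swap_apply_of_ne_of_ne hau hav]
  rw [ht, hd, Equiv.swap_apply_left, Equiv.swap_apply_right]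

lemma wordOf_image_swap (mu : Fin N → ℤ) (u v : Fin N)
    (hadj : (u : ℕ) + 1 = (v : ℕ)) (hmu : mu u = mu v) (S : Finset (Fin N)) :
    wordOf N mu (S.image (Equiv.swap u v)) = wordOf N mu S := by
  classical
  have heq : ∀ (T : Finset (Fin N)),
      wordOf N mu T
        = (List.finRange N).filterMap (fun a => if a ∈ T then none else some (mu a)) := by
    intro T
    unfold wordOf
    rw [filter_map_eq_filterMap]
    congr 1
    funext a
    by_cases h : a ∈ T <;> simp [h]
  rw [heq, heq]
  have hgcomp : (fun a => if a ∈ S.image (Equiv.swap u v) then none else some (mu a))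
      = (fun a => if a ∈ S then none else some (mu a)) ∘ (Equiv.swap u v) := by
    funext a
    have hmem : a ∈ S.image (Equiv.swap u v) ↔ Equiv.swap u v a ∈ S := by
      constructor
      · rintro h
        obtain ⟨b, hb, rfl⟩ := Finset.mem_image.1 h
        simpa [Equiv.swap_apply_self] using hb
      · intro h
        exact Finset.mem_image.2 ⟨Equiv.swap u v a, h, by simp [Equiv.swap_apply_self]⟩
    have hmua : mu (Equiv.swap u v a) = mu a :=
      congrFun (comp_swap_eq_self mu u v hmu) a
    simp only [Function.comp_apply, hmem, hmua]
  rw [hgcomp, ← List.filterMap_map]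
  rw [map_swap_finRange u v hadj]
  conv_rhs => rw [finRange_decomp u v hadj]
  rw [List.filterMap_append, List.filterMap_append]
  congr 1
  rw [List.filterMap_cons, List.filterMap_cons, List.filterMap_cons, List.filterMap_cons]
  by_cases hu : u ∈ S <;> by_cases hv : v ∈ S <;> simp [hu, hv, hmu]

end Aux

section Main

variable {K : Type*} [Field K] {N : ℕ}

lemma pi_single_comp_swap (j u v : Fin N) (c : ℤ) :
    (Pi.single j c : Fin N → ℤ) ∘ (Equiv.swap u v) = Pi.single (Equiv.swap u v j) c := by
  funext k
  simp only [Function.comp_apply, Pi.single_apply]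
  congr 1
  simp only [eq_iff_iff]
  constructor
  · intro h
    rw [← h, Equiv.swap_apply_self]
  · intro h
    rw [h, Equiv.swap_apply_self]

/-- The swap of variables as a ring homomorphism. -/
def swapHom (u v : Fin N) : Lp K N →+* Lp K N :=
  AddMonoidAlgebra.mapDomainRingHom K
    (AddMonoidHom.mk' (fun m : Fin N → ℤ => m ∘ Equiv.swap u v) (fun _ _ => rfl))

lemma swapVars_eq_swapHom (u v : Fin N) (f : Lp K N) :
    swapVars u v f = swapHom (K := K) u v f := (swapVars_eq_mapDomain u v f).trans rfl

lemma swapHom_single (u v : Fin N) (m : Fin N → ℤ) (c : K) :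
    swapHom (K := K) u v (AddMonoidAlgebra.single m c)
      = AddMonoidAlgebra.single (m ∘ Equiv.swap u v) c := by
  show AddMonoidAlgebra.mapDomain _ _ = _
  rw [AddMonoidAlgebra.mapDomain_single]
  rfl

lemma swapHom_CC (u v : Fin N) (c : K) : swapHom (K := K) u v (CC c) = CC c := by
  unfold CC
  rw [swapHom_single]
  rfl

lemma swapVars_FF (pa pb pg pd pt : K) (mu : Fin N → ℤ) (u v : Fin N)
    (hadj : (u : ℕ) + 1 = (v : ℕ)) (hmu : mu u = mu v) :
    swapVars u v (FF pa pb pg pd pt N mu) = FF pa pb pg pd pt N mu := by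
  classical
  rw [swapVars_eq_swapHom]
  unfold FF
  rw [map_sum]
  have hterm : ∀ S ∈ (Finset.univ.filter fun k => mu k ≠ 0).powerset,
      swapHom (K := K) u v (CC (Rt pa pb pg pd pt (wordOf N mu S)) *
          ∏ i ∈ S, (AddMonoidAlgebra.single (Pi.single i (mu i)) (1 : K) - 1))
        = CC (Rt pa pb pg pd pt (wordOf N mu (S.image (Equiv.swap u v)))) *
          ∏ i ∈ S.image (Equiv.swap u v),
            (AddMonoidAlgebra.single (Pi.single i (mu i)) (1 : K) - 1) := by
    intro S _
    rw [map_mul, swapHom_CC, wordOf_image_swap mu u v hadj hmu, map_prod]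
    congr 1
    rw [Finset.prod_image (fun a _ b _ h => (Equiv.swap u v).injective h)]
    refine Finset.prod_congr rfl fun j _ => ?_
    rw [map_sub, map_one, swapHom_single, pi_single_comp_swap]
    have : mu (Equiv.swap u v j) = mu j := congrFun (comp_swap_eq_self mu u v hmu) j
    rw [this]
  rw [Finset.sum_congr rfl hterm]
  refine Finset.sum_bij' (fun S _ => S.image (Equiv.swap u v))
    (fun S _ => S.image (Equiv.swap u v)) ?_ ?_ ?_ ?_ ?_
  · intro S hS
    rw [Finset.mem_powerset] at hS ⊢
    intro k hk
    obtain ⟨b, hb, rfl⟩ := Finset.mem_image.1 hk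
    have := hS hb
    simp only [Finset.mem_filter, Finset.mem_univ, true_and] at this ⊢
    have hc : mu ((Equiv.swap u v) b) = mu b := congrFun (comp_swap_eq_self mu u v hmu) b
    rwa [hc]
  · intro S hS
    rw [Finset.mem_powerset] at hS ⊢
    intro k hk
    obtain ⟨b, hb, rfl⟩ := Finset.mem_image.1 hk
    have := hS hb
    simp only [Finset.mem_filter, Finset.mem_univ, true_and] at this ⊢
    have hc : mu ((Equiv.swap u v) b) = mu b := congrFun (comp_swap_eq_self mu u v hmu) b
    rwa [hc]
  · intro S _
    rw [Finset.image_image]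
    rw [show ((Equiv.swap u v : Fin N → Fin N) ∘ (Equiv.swap u v : Fin N → Fin N)) = id from ?_]
    · exact Finset.image_id
    · funext a; simp [Equiv.swap_apply_self]
  · intro S _
    rw [Finset.image_image]
    rw [show ((Equiv.swap u v : Fin N → Fin N) ∘ (Equiv.swap u v : Fin N → Fin N)) = id from ?_]
    · exact Finset.image_id
    · funext a; simp [Equiv.swap_apply_self]
  · intro S _
    rfl

end Main

/-- For `1 ≤ i ≤ N-1`, `a ∈ {-1,0,1}` and words `x, y` in `{-1,0,1}` with
`|x| = i-1`, `|x|+|y| = N-2`, we have `T̃_i(F_{xaay}) = t F_{xaay}`; in particular, when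
`a ∈ {±1}`, the Laurent polynomial `F_{xaay}` is symmetric in the variables `z_i, z_{i+1}`. -/
theorem statement14 (N : ℕ) (i : ℕ) (h1 : 1 ≤ i) (h2 : i ≤ N - 1) (aa : ℤ)
    (ha : aa = -1 ∨ aa = 0 ∨ aa = 1)
    (x y : List ℤ) (hx : ∀ s ∈ x, s = -1 ∨ s = 0 ∨ s = 1)
    (hy : ∀ s ∈ y, s = -1 ∨ s = 0 ∨ s = 1)
    (hxl : x.length = i - 1) (hyl : x.length + y.length = N - 2) :
    (Tmid vT ⟨i - 1, by omega⟩ ⟨i, by omega⟩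
        (FF vA vB vG vD vT N (funOf N (x ++ [aa, aa] ++ y))) =
      CC vT * FF vA vB vG vD vT N (funOf N (x ++ [aa, aa] ++ y))) ∧
    ((aa = -1 ∨ aa = 1) →
      swapVars ⟨i - 1, by omega⟩ ⟨i, by omega⟩
          (FF vA vB vG vD vT N (funOf N (x ++ [aa, aa] ++ y))) =
        FF vA vB vG vD vT N (funOf N (x ++ [aa, aa] ++ y))) := by
  have hN2 : 2 ≤ N := by omega
  have e1 : (x ++ [aa, aa] ++ y).getD (i - 1) 0 = aa := by
    rw [List.getD_eq_getElem?_getD,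
      List.getElem?_append_left (by simp only [List.length_append, List.length_cons, List.length_nil]; omega),
      List.getElem?_append_right (by omega)]
    have : i - 1 - x.length = 0 := by omega
    rw [this]
    rfl
  have e2 : (x ++ [aa, aa] ++ y).getD i 0 = aa := by
    rw [List.getD_eq_getElem?_getD,
      List.getElem?_append_left (by simp only [List.length_append, List.length_cons, List.length_nil]; omega),
      List.getElem?_append_right (by omega)]
    have : i - x.length = 1 := by omega
    rw [this]
    rfl
  have hmu : funOf N (x ++ [aa, aa] ++ y) ⟨i - 1, by omega⟩
      = funOf N (x ++ [aa, aa] ++ y) ⟨i, by omega⟩ := by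
    show (x ++ [aa, aa] ++ y).getD (i - 1) 0 = (x ++ [aa, aa] ++ y).getD i 0
    rw [e1, e2]
  have hadj : (((⟨i - 1, by omega⟩ : Fin N)) : ℕ) + 1 = ((⟨i, by omega⟩ : Fin N) : ℕ) := by
    simp only [Fin.val_mk]
    omega
  have hs := swapVars_FF vA vB vG vD vT (funOf N (x ++ [aa, aa] ++ y))
    ⟨i - 1, by omega⟩ ⟨i, by omega⟩ hadj hmu
  exact ⟨Tmid_of_swap_symm vT _ _ _ hs, fun _ => hs⟩

end RST
end
end
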